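/- arXiv:1010.3191 — 4 statements merged into one kernel-verified Lean document; each statement's English description precedes it below -/
import Mathlib

section
/- For any pair partition π of {1,...,2k}, the number of circles g(π) satisfies g(π) ≤ k + 1. Equivalently, the rank f(π) of the associated linear system satisfies f(π) ≥ k − 1. -/
open Matrix MeasureTheory
open scoped Kronecker BigOperators

/-- `a i, b i` list the blocks `{a i, b i}` of a pair partition of `{0,...,2k-1}`,
with `a i < b i` and blocks labeled so that `a` is increasing. -/
abbrev IsPairPart (k : ℕ) (a b : Fin k → Fin (2*k)) : Prop :=
  (∀ i, a i < b i) ∧ (∀ i j : Fin k, i < j → a i < a j) ∧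
  (∀ i j : Fin k, i ≠ j → a i ≠ a j ∧ a i ≠ b j ∧ b i ≠ b j) ∧
  (∀ x : Fin (2*k), ∃ i, x = a i ∨ x = b i)

/-- cyclic successor -/
def cyc {n : ℕ} (x : Fin n) : Fin n := ⟨(x.val + 1) % n, Nat.mod_lt _ x.pos⟩

/-- the relation generated by the equations `t_{a i} = t_{cyc (b i)}`, `t_{b i} = t_{cyc (a i)}` -/
def ppRel {k : ℕ} (a b : Fin k → Fin (2*k)) (x y : Fin (2*k)) : Prop :=
  ∃ i, (x = a i ∧ y = cyc (b i)) ∨ (x = b i ∧ y = cyc (a i))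

/-- `g(π)`: the number of equivalence classes ("circles") -/
noncomputable def gCircles {k : ℕ} (a b : Fin k → Fin (2*k)) : ℕ :=
  Nat.card (Quotient (Relation.EqvGen.setoid (ppRel a b)))

/-- coefficient matrix over ℚ of the linear system determined by the pair partition -/
def eqMat {k : ℕ} (a b : Fin k → Fin (2*k)) : Matrix (Fin k ⊕ Fin k) (Fin (2*k)) ℚ :=
  fun e x => match e with
  | Sum.inl i => (if x = a i then 1 else 0) - (if x = cyc (b i) then 1 else 0)
  | Sum.inr i => (if x = b i then 1 else 0) - (if x = cyc (a i) then 1 else 0)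

/-- `f(π)`: the rank of the linear system -/
noncomputable def fRank {k : ℕ} (a b : Fin k → Fin (2*k)) : ℕ := (eqMat a b).rank

/-- noncrossing pair partition -/
def Noncross {k : ℕ} (a b : Fin k → Fin (2*k)) : Prop :=
  ¬ ∃ i j, a i < a j ∧ a j < b i ∧ b i < b j

abbrev PP (k : ℕ) := {p : (Fin k → Fin (2*k)) × (Fin k → Fin (2*k)) // IsPairPart k p.1 p.2}


section AuxPP
open Relation


variable {α : Type*}

local notation "E" => Relation.EqvGen

lemma eqvGen_flatten {r s : α → α → Prop} (h : ∀ x y, r x y → E s x y)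
    {x y : α} (hxy : E r x y) : E s x y := by
  induction hxy with
  | rel u v huv => exact h u v huv
  | refl u => exact .refl u
  | symm u v _ ih => exact .symm _ _ ih
  | trans u v w _ _ ih1 ih2 => exact .trans _ _ _ ih1 ih2

lemma card_quot_mono [Finite α] {r s : α → α → Prop}
    (h : ∀ x y, r x y → E s x y) :
    Nat.card (Quotient (Relation.EqvGen.setoid s)) ≤
      Nat.card (Quotient (Relation.EqvGen.setoid r)) := by
  refine Nat.card_le_card_of_surjective
    (Quotient.lift (Quotient.mk _)
      (fun u v huv => Quotient.sound (eqvGen_flatten h huv))) ?_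
  intro q
  induction q using Quotient.ind with
  | _ u => exact ⟨Quotient.mk _ u, rfl⟩

lemma eqvGen_sup_pair {r : α → α → Prop} {x y u v : α}
    (h : E (fun p q => r p q ∨ (p = x ∧ q = y)) u v) :
    E r u v ∨ (E r u x ∧ E r y v) ∨ (E r u y ∧ E r x v) := by
  induction h with
  | rel p q hpq =>
    rcases hpq with hpq | ⟨rfl, rfl⟩
    · exact Or.inl (.rel _ _ hpq)
    · exact Or.inr (Or.inl ⟨.refl _, .refl _⟩)
  | refl p => exact Or.inl (.refl p)
  | symm p q _ ih =>
    rcases ih with h1 | ⟨h1, h2⟩ | ⟨h1, h2⟩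
    · exact Or.inl (.symm _ _ h1)
    · exact Or.inr (Or.inr ⟨.symm _ _ h2, .symm _ _ h1⟩)
    · exact Or.inr (Or.inl ⟨.symm _ _ h2, .symm _ _ h1⟩)
  | trans p q w _ _ ih1 ih2 =>
    rcases ih1 with h1 | ⟨h1, h2⟩ | ⟨h1, h2⟩
    · rcases ih2 with h3 | ⟨h3, h4⟩ | ⟨h3, h4⟩
      · exact Or.inl (.trans _ _ _ h1 h3)
      · exact Or.inr (Or.inl ⟨.trans _ _ _ h1 h3, h4⟩)
      · exact Or.inr (Or.inr ⟨.trans _ _ _ h1 h3, h4⟩)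
    · rcases ih2 with h3 | ⟨h3, h4⟩ | ⟨h3, h4⟩
      · exact Or.inr (Or.inl ⟨h1, .trans _ _ _ h2 h3⟩)
      · exact Or.inl (.trans _ _ _ h1
          (.trans _ _ _ (.symm _ _ (.trans _ _ _ h2 h3)) h4))
      · exact Or.inl (.trans _ _ _ h1 h4)
    · rcases ih2 with h3 | ⟨h3, h4⟩ | ⟨h3, h4⟩
      · exact Or.inr (Or.inr ⟨h1, .trans _ _ _ h2 h3⟩)
      · exact Or.inl (.trans _ _ _ h1 h4)
      · exact Or.inl (.trans _ _ _ h1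
          (.trans _ _ _ (.symm _ _ (.trans _ _ _ h2 h3)) h4))

open Classical in
lemma card_quot_le_sup_pair [Finite α] (r : α → α → Prop) (x y : α) :
    Nat.card (Quotient (Relation.EqvGen.setoid r)) ≤
      Nat.card (Quotient (Relation.EqvGen.setoid
        (fun p q => r p q ∨ (p = x ∧ q = y)))) + 1 := by
  set t := Relation.EqvGen.setoid (fun p q : α => r p q ∨ (p = x ∧ q = y)) with ht
  have hwd : ∀ u v : α, (Relation.EqvGen.setoid r).r u v →
      (if E r u y then (none : Option (Quotient t)) else some (Quotient.mk t u)) =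
      (if E r v y then none else some (Quotient.mk t v)) := by
    intro u v huv
    have hy : E r u y ↔ E r v y :=
      ⟨fun h => .trans _ _ _ (.symm _ _ huv) h, fun h => .trans _ _ _ huv h⟩
    by_cases hu : E r u y
    · rw [if_pos hu, if_pos (hy.mp hu)]
    · rw [if_neg hu, if_neg (fun h => hu (hy.mpr h))]
      exact congrArg some
        (Quotient.sound (eqvGen_flatten (fun a b h => .rel _ _ (Or.inl h)) huv))
  have hinj : Function.Injective (Quotient.lift _ hwd) := by
    intro q1 q2
    induction q1 using Quotient.ind with
    | _ u =>
    induction q2 using Quotient.ind with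
    | _ v =>
    intro hfe
    simp only [Quotient.lift_mk] at hfe
    by_cases hu : E r u y <;> by_cases hv : E r v y
    · exact Quotient.sound (.trans _ _ _ hu (.symm _ _ hv))
    · rw [if_pos hu, if_neg hv] at hfe; exact absurd hfe (by simp)
    · rw [if_neg hu, if_pos hv] at hfe; exact absurd hfe (by simp)
    · rw [if_neg hu, if_neg hv, Option.some.injEq] at hfe
      rcases eqvGen_sup_pair (Quotient.exact hfe) with h1 | ⟨h1, h2⟩ | ⟨h1, h2⟩
      · exact Quotient.sound h1
      · exact absurd (.symm _ _ h2) hv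
      · exact absurd h1 hu
  haveI : Finite (Quotient t) := Quotient.finite _
  haveI := Fintype.ofFinite (Quotient t)
  calc Nat.card (Quotient (Relation.EqvGen.setoid r))
      ≤ Nat.card (Option (Quotient t)) := Nat.card_le_card_of_injective _ hinj
    _ = Nat.card (Quotient t) + 1 := by
        rw [Nat.card_eq_fintype_card, Nat.card_eq_fintype_card, Fintype.card_option]

/-- multiplying by a swap changes the class count by at most one -/
lemma card_quot_swap [Finite α] [DecidableEq α] (σ : α → α) (x y : α) :
    Nat.card (Quotient (Relation.EqvGen.setoid (fun u v => v = σ (Equiv.swap x y u)))) ≤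
      Nat.card (Quotient (Relation.EqvGen.setoid (fun u v => v = σ u))) + 1 := by
  calc Nat.card (Quotient (Relation.EqvGen.setoid
          (fun u v => v = σ (Equiv.swap x y u))))
      ≤ Nat.card (Quotient (Relation.EqvGen.setoid
          (fun p q => (q = σ (Equiv.swap x y p)) ∨ (p = x ∧ q = y)))) + 1 :=
        card_quot_le_sup_pair _ x y
    _ ≤ Nat.card (Quotient (Relation.EqvGen.setoid (fun u v => v = σ u))) + 1 := by
        gcongr
        apply card_quot_mono
        rintro z w rfl
        by_cases hzx : z = x
        · subst hzx
          refine Relation.EqvGen.trans _ y _ (.rel _ _ (Or.inr ⟨rfl, rfl⟩)) ?_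
          refine .rel _ _ (Or.inl ?_)
          rw [Equiv.swap_apply_right]
        · by_cases hzy : z = y
          · subst hzy
            refine Relation.EqvGen.trans _ x _
              (.symm _ _ (.rel _ _ (Or.inr ⟨rfl, rfl⟩))) ?_
            refine .rel _ _ (Or.inl ?_)
            rw [Equiv.swap_apply_left]
          · refine .rel _ _ (Or.inl ?_)
            rw [Equiv.swap_apply_of_ne_of_ne hzx hzy]





/-- the full cycle has one orbit -/
lemma card_quot_cyc (n : ℕ) (hn : 0 < n) :
    Nat.card (Quotient (Relation.EqvGen.setoid (fun u v : Fin n => v = cyc u))) ≤ 1 := by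
  have key : ∀ v : ℕ, ∀ hv : v < n, E (fun u v : Fin n => v = cyc u) ⟨0, hn⟩ ⟨v, hv⟩ := by
    intro v
    induction v with
    | zero => intro hv; exact .refl _
    | succ m ih =>
      intro hv
      have hm : m < n := Nat.lt_of_succ_lt hv
      refine .trans _ _ _ (ih hm) (.rel _ _ ?_)
      show (⟨m + 1, hv⟩ : Fin n) = cyc ⟨m, hm⟩
      simp only [cyc]
      exact Fin.ext (by simp [Nat.mod_eq_of_lt hv])
  haveI : Subsingleton (Quotient (Relation.EqvGen.setoid (fun u v : Fin n => v = cyc u))) := by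
    constructor
    intro q1 q2
    induction q1 using Quotient.ind with
    | _ u =>
    induction q2 using Quotient.ind with
    | _ v =>
    exact Quotient.sound (.trans _ _ _ (.symm _ _ (key u.val u.isLt)) (key v.val v.isLt))
  exact Finite.card_le_one_iff_subsingleton.mpr ‹_›

/-- iterated composition with swaps -/
def sig {k : ℕ} (a b : Fin k → Fin (2*k)) : ℕ → Fin (2*k) → Fin (2*k)
  | 0 => cyc
  | (j+1) => fun x =>
      if h : j < k then sig a b j (Equiv.swap (a ⟨j, h⟩) (b ⟨j, h⟩) x) else sig a b j x

lemma card_sig_le {k : ℕ} (a b : Fin k → Fin (2*k)) (hk : 0 < k) :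
    ∀ j : ℕ, Nat.card (Quotient (Relation.EqvGen.setoid
      (fun u v : Fin (2*k) => v = sig a b j u))) ≤ j + 1 := by
  intro j
  induction j with
  | zero => exact card_quot_cyc (2*k) (by omega)
  | succ j ih =>
    by_cases hj : j < k
    · have hrel : (fun u v : Fin (2*k) => v = sig a b (j+1) u) =
          (fun u v => v = (sig a b j) (Equiv.swap (a ⟨j, hj⟩) (b ⟨j, hj⟩) u)) := by
        funext u v
        simp only [sig, dif_pos hj]
      rw [hrel]
      exact le_trans (card_quot_swap (sig a b j) _ _) (by omega)
    · have hrel : (fun u v : Fin (2*k) => v = sig a b (j+1) u) =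
          (fun u v => v = sig a b j u) := by
        funext u v
        simp only [sig, dif_neg hj]
      rw [hrel]
      exact le_trans ih (by omega)

section Eval
variable {k : ℕ} {a b : Fin k → Fin (2*k)}
  (hd : ∀ i j : Fin k, i ≠ j → a i ≠ a j ∧ a i ≠ b j ∧ b i ≠ b j)

include hd

lemma swap_fix {i j : Fin k} (hij : i ≠ j) :
    Equiv.swap (a j) (b j) (a i) = a i ∧ Equiv.swap (a j) (b j) (b i) = b i := by
  obtain ⟨h1, h2, h3⟩ := hd i j hij
  obtain ⟨h4, h5, h6⟩ := hd j i hij.symm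
  exact ⟨Equiv.swap_apply_of_ne_of_ne h1 h2,
    Equiv.swap_apply_of_ne_of_ne (Ne.symm h5) h3⟩

lemma sig_low (i : Fin k) :
    ∀ j, j ≤ i.val → sig a b j (a i) = cyc (a i) ∧ sig a b j (b i) = cyc (b i) := by
  intro j
  induction j with
  | zero => intro _; exact ⟨rfl, rfl⟩
  | succ j ih =>
    intro hji
    have hj : j < k := lt_of_lt_of_le (Nat.lt_of_succ_le hji) i.isLt.le
    have hij : i ≠ ⟨j, hj⟩ := Fin.ne_of_val_ne (by show i.val ≠ j; omega)
    obtain ⟨e1, e2⟩ := swap_fix hd hij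
    have ihj := ih (by omega)
    constructor
    · show (if h : j < k then sig a b j (Equiv.swap (a ⟨j, h⟩) (b ⟨j, h⟩) (a i))
          else sig a b j (a i)) = cyc (a i)
      rw [dif_pos hj, e1, ihj.1]
    · show (if h : j < k then sig a b j (Equiv.swap (a ⟨j, h⟩) (b ⟨j, h⟩) (b i))
          else sig a b j (b i)) = cyc (b i)
      rw [dif_pos hj, e2, ihj.2]

lemma sig_high (i : Fin k) :
    ∀ j, i.val < j → sig a b j (a i) = cyc (b i) ∧ sig a b j (b i) = cyc (a i) := by
  intro j
  induction j with
  | zero => intro hij; exact absurd hij (Nat.not_lt_zero _)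
  | succ j ih =>
    intro hij
    by_cases hie : i.val = j
    · have hj : j < k := hie ▸ i.isLt
      have hieq : (⟨j, hj⟩ : Fin k) = i := Fin.ext hie.symm
      have hlow := sig_low hd i j (le_of_eq hie.symm)
      constructor
      · show (if h : j < k then sig a b j (Equiv.swap (a ⟨j, h⟩) (b ⟨j, h⟩) (a i))
            else sig a b j (a i)) = cyc (b i)
        rw [dif_pos hj, hieq, Equiv.swap_apply_left, hlow.2]
      · show (if h : j < k then sig a b j (Equiv.swap (a ⟨j, h⟩) (b ⟨j, h⟩) (b i))
            else sig a b j (b i)) = cyc (a i)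
        rw [dif_pos hj, hieq, Equiv.swap_apply_right, hlow.1]
    · have hij' : i.val < j := by omega
      have ihj := ih hij'
      by_cases hj : j < k
      · have hne : i ≠ ⟨j, hj⟩ := by
          intro hc
          rw [hc] at hij'
          simp at hij'
        obtain ⟨e1, e2⟩ := swap_fix hd hne
        constructor
        · show (if h : j < k then sig a b j (Equiv.swap (a ⟨j, h⟩) (b ⟨j, h⟩) (a i))
              else sig a b j (a i)) = cyc (b i)
          rw [dif_pos hj, e1, ihj.1]
        · show (if h : j < k then sig a b j (Equiv.swap (a ⟨j, h⟩) (b ⟨j, h⟩) (b i))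
              else sig a b j (b i)) = cyc (a i)
          rw [dif_pos hj, e2, ihj.2]
      · constructor
        · show (if h : j < k then sig a b j (Equiv.swap (a ⟨j, h⟩) (b ⟨j, h⟩) (a i))
              else sig a b j (a i)) = cyc (b i)
          rw [dif_neg hj, ihj.1]
        · show (if h : j < k then sig a b j (Equiv.swap (a ⟨j, h⟩) (b ⟨j, h⟩) (b i))
              else sig a b j (b i)) = cyc (a i)
          rw [dif_neg hj, ihj.2]

end Eval

end AuxPP

/-- For any pair partition of {1,...,2k}: `g(π) ≤ k+1`, equivalently `f(π) ≥ k-1`. -/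
theorem circles_le_succ (k : ℕ) (a b : Fin k → Fin (2*k))
    (h : IsPairPart k a b) :
    gCircles a b ≤ k + 1 ∧ k - 1 ≤ fRank a b := by
  obtain ⟨h1, h2, h3, h4⟩ := h
  have hg : gCircles a b ≤ k + 1 := by
    rcases Nat.eq_zero_or_pos k with hk | hk
    · subst hk
      haveI : IsEmpty (Fin (2*0)) := by
        constructor; intro x; exact absurd x.isLt (by omega)
      haveI : Subsingleton (Quotient (Relation.EqvGen.setoid (ppRel a b))) := by
        constructor
        intro q1 q2
        induction q1 using Quotient.ind with
        | _ u => exact isEmptyElim u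
      exact le_trans (Finite.card_le_one_iff_subsingleton.mpr ‹_›) (by omega)
    · have hrel : ppRel a b = fun u v => v = sig a b k u := by
        funext u v
        apply propext
        constructor
        · rintro ⟨i, ⟨rfl, rfl⟩ | ⟨rfl, rfl⟩⟩
          · exact ((sig_high h3 i k i.isLt).1).symm
          · exact ((sig_high h3 i k i.isLt).2).symm
        · rintro rfl
          obtain ⟨i, hi | hi⟩ := h4 u
          · exact ⟨i, Or.inl ⟨hi, by rw [hi, (sig_high h3 i k i.isLt).1]⟩⟩
          · exact ⟨i, Or.inr ⟨hi, by rw [hi, (sig_high h3 i k i.isLt).2]⟩⟩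
      unfold gCircles
      rw [hrel]
      exact card_sig_le a b hk k
  refine ⟨hg, ?_⟩
  -- linear algebra part
  have hrn := LinearMap.finrank_range_add_finrank_ker (eqMat a b).mulVecLin
  rw [Module.finrank_fintype_fun_eq_card, Fintype.card_fin] at hrn
  have hker : Module.finrank ℚ (LinearMap.ker (eqMat a b).mulVecLin) ≤ gCircles a b := by
    set s := Relation.EqvGen.setoid (ppRel a b) with hs
    haveI : Finite (Quotient s) := Quotient.finite _
    haveI := Fintype.ofFinite (Quotient s)
    let Φ : (Quotient s → ℚ) →ₗ[ℚ] (Fin (2*k) → ℚ) :=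
      { toFun := fun w x => w (Quotient.mk s x),
        map_add' := fun _ _ => rfl,
        map_smul' := fun _ _ => rfl }
    have hle : LinearMap.ker (eqMat a b).mulVecLin ≤ LinearMap.range Φ := by
      intro v hv
      rw [LinearMap.mem_ker] at hv
      have hv' : (eqMat a b).mulVec v = 0 := hv
      have hA : ∀ i, v (a i) = v (cyc (b i)) := by
        intro i
        have hrow := congrFun hv' (Sum.inl i)
        simp only [Matrix.mulVec, dotProduct, eqMat, sub_mul, ite_mul, one_mul,
          zero_mul, Finset.sum_sub_distrib, Finset.sum_ite_eq', Finset.mem_univ, if_true,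
          Pi.zero_apply] at hrow
        exact sub_eq_zero.mp hrow
      have hB : ∀ i, v (b i) = v (cyc (a i)) := by
        intro i
        have hrow := congrFun hv' (Sum.inr i)
        simp only [Matrix.mulVec, dotProduct, eqMat, sub_mul, ite_mul, one_mul,
          zero_mul, Finset.sum_sub_distrib, Finset.sum_ite_eq', Finset.mem_univ, if_true,
          Pi.zero_apply] at hrow
        exact sub_eq_zero.mp hrow
      have hresp : ∀ u w : Fin (2*k), Relation.EqvGen (ppRel a b) u w → v u = v w := by
        intro u w huw
        induction huw with
        | rel p q hpq =>
          obtain ⟨i, ⟨rfl, rfl⟩ | ⟨rfl, rfl⟩⟩ := hpq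
          · exact hA i
          · exact hB i
        | refl p => rfl
        | symm p q _ ih => exact ih.symm
        | trans p q r _ _ ih1 ih2 => exact ih1.trans ih2
      exact ⟨Quotient.lift v (fun u w huw => hresp u w huw), rfl⟩
    calc Module.finrank ℚ (LinearMap.ker (eqMat a b).mulVecLin)
        ≤ Module.finrank ℚ (LinearMap.range Φ) := Submodule.finrank_mono hle
      _ ≤ Module.finrank ℚ (Quotient s → ℚ) := Φ.finrank_range_le
      _ = Fintype.card (Quotient s) := Module.finrank_fintype_fun_eq_card _
      _ = Nat.card (Quotient s) := Nat.card_eq_fintype_card.symm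
      _ = gCircles a b := rfl
  have hfr : fRank a b = Module.finrank ℚ (LinearMap.range (eqMat a b).mulVecLin) := rfl
  omega
end

section
/- Let H = Φ T where T = (A_{i−j})_{i,j=1}^N is an mN×mN block Toeplitz matrix with m×m blocks A_s, and Φ = P ⊗ I_m with P the N×N exchange (anti-identity) matrix. Then for even k, tr(H^k) = Σ_{i=1}^N Σ_{j_1,...,j_k=−(N−1)}^{N−1} tr(A_{j_1}···A_{j_k}) · Π_{l=1}^k 1_{[1,N]}(i − Σ_{q=1}^l (−1)^q j_q) · δ_{0, Σ_{q=1}^k (−1)^q j_q}. -/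
open Matrix
open scoped Kronecker BigOperators

/-- the `N × N` upper (backward) shift matrix `B = (δ_{i+1,j})` (1's on the superdiagonal) -/
def shiftB (N : ℕ) : Matrix (Fin N) (Fin N) ℝ :=
  Matrix.of fun i j => if (i : ℕ) + 1 = (j : ℕ) then 1 else 0

/-- the `N × N` lower (forward) shift matrix `F = (δ_{i,j+1})` (1's on the subdiagonal) -/
def shiftF (N : ℕ) : Matrix (Fin N) (Fin N) ℝ :=
  Matrix.of fun i j => if (i : ℕ) = (j : ℕ) + 1 then 1 else 0

/-- the `N × N` exchange (anti-identity) permutation matrix `P`, `P e_i = e_{N+1-i}` -/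
def exchP (N : ℕ) : Matrix (Fin N) (Fin N) ℝ :=
  Matrix.of fun i j => if (i : ℕ) + (j : ℕ) + 1 = N then 1 else 0

/-- the `mN × mN` block Toeplitz matrix whose `(i,j)` block is `A (i - j)` -/
def blockToeplitz (N m : ℕ) (A : ℤ → Matrix (Fin m) (Fin m) ℝ) :
    Matrix (Fin N × Fin m) (Fin N × Fin m) ℝ :=
  Matrix.of fun x y => A ((x.1 : ℤ) - (y.1 : ℤ)) x.2 y.2



lemma listProd_apply (n : ℕ) {ι : Type*} [Fintype ι] [DecidableEq ι]
    (M : Fin n → Matrix ι ι ℝ) (i j : ι) :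
    (List.ofFn M).prod i j =
      ∑ v : Fin (n+1) → ι,
        if v 0 = i ∧ v (Fin.last n) = j then ∏ l : Fin n, M l (v l.castSucc) (v l.succ) else 0 := by
  induction n generalizing i j with
  | zero =>
    rw [← Equiv.sum_comp (Equiv.funUnique (Fin 1) ι).symm]
    simp [List.ofFn_zero, Matrix.one_apply, ite_and, eq_comm]
  | succ n ih =>
    rw [List.ofFn_succ, List.prod_cons, Matrix.mul_apply]
    simp only [ih]
    rw [← Equiv.sum_comp (Fin.consEquiv fun _ : Fin (n+2) => ι)]
    rw [Fintype.sum_prod_type]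
    simp only [Fin.consEquiv_apply, ← Fin.succ_last, Fin.cons_zero, Fin.cons_succ,
      Fin.prod_univ_succ, Fin.castSucc_zero, Fin.succ_zero_eq_one, ← Fin.succ_castSucc,
      Finset.mul_sum, mul_ite, mul_zero, ite_and]
    rw [Finset.sum_comm]
    conv_rhs => rw [Finset.sum_comm]
    simp [Finset.sum_ite_eq, Finset.sum_ite_eq']


lemma snoc_head_succ (n : ℕ) [NeZero n] {ι : Type*} (w : Fin n → ι) (l : Fin n) :
    (Fin.snoc w (w 0) : Fin (n+1) → ι) l.succ = w (l + 1) := by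
  have hn : 0 < n := Nat.pos_of_ne_zero (NeZero.ne n)
  by_cases h : l.val + 1 < n
  · have h1 : l.succ = Fin.castSucc ⟨l.val + 1, h⟩ := by ext; simp
    rw [h1, Fin.snoc_castSucc]
    congr 1
    apply Fin.ext
    simp only [Fin.add_def, Fin.val_one']
    rw [Nat.mod_eq_of_lt (show 1 < n by omega), Nat.mod_eq_of_lt h]
  · have hl : l.val + 1 = n := by omega
    have h1 : l.succ = Fin.last n := by ext; simp [hl]
    have h2 : l + 1 = (0 : Fin n) := by
      apply Fin.ext
      simp only [Fin.add_def, Fin.val_one', Fin.val_zero]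
      rcases Nat.lt_or_ge n 2 with h3 | h3
      · have hn1 : n = 1 := by omega
        subst hn1; simp
      · rw [Nat.mod_eq_of_lt (show 1 < n by omega), hl, Nat.mod_self]
    rw [h1, Fin.snoc_last, h2]

lemma trace_listProd (n : ℕ) [NeZero n] {ι : Type*} [Fintype ι] [DecidableEq ι]
    (M : Fin n → Matrix ι ι ℝ) :
    (List.ofFn M).prod.trace = ∑ w : Fin n → ι, ∏ l : Fin n, M l (w l) (w (l+1)) := by
  rw [Matrix.trace]
  simp only [Matrix.diag, listProd_apply]
  rw [Finset.sum_comm]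
  have key : ∀ v : Fin (n+1) → ι,
      (∑ x : ι, if v 0 = x ∧ v (Fin.last n) = x then ∏ l : Fin n, M l (v l.castSucc) (v l.succ) else 0)
      = if v (Fin.last n) = v 0 then ∏ l : Fin n, M l (v l.castSucc) (v l.succ) else 0 := by
    intro v
    simp [ite_and, Finset.sum_ite_eq, eq_comm]
  simp only [key]
  rw [← Equiv.sum_comp (Fin.snocEquiv fun _ : Fin (n+1) => ι)]
  rw [Fintype.sum_prod_type]
  have h0 : ∀ (w : Fin n → ι) (x : ι), (Fin.snoc w x : Fin (n+1) → ι) 0 = w 0 := by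
    intro w x
    have : (0 : Fin (n+1)) = Fin.castSucc (0 : Fin n) := by simp
    rw [this, Fin.snoc_castSucc]
  rw [Finset.sum_comm]
  apply Finset.sum_congr rfl
  intro w _
  have : ∀ x : ι, (if (Fin.snocEquiv fun _ : Fin (n+1) => ι) (x, w) (Fin.last n) =
        (Fin.snocEquiv fun _ : Fin (n+1) => ι) (x, w) 0 then
        ∏ l : Fin n, M l ((Fin.snocEquiv fun _ : Fin (n+1) => ι) (x, w) l.castSucc)
          ((Fin.snocEquiv fun _ : Fin (n+1) => ι) (x, w) l.succ) else 0)
      = if x = w 0 then ∏ l : Fin n, M l ((Fin.snoc w x : Fin (n+1) → ι) l.castSucc)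
          ((Fin.snoc w x : Fin (n+1) → ι) l.succ) else 0 := by
    intro x
    simp [Fin.snocEquiv, Fin.snoc_last, h0]
  rw [Finset.sum_congr rfl (fun x _ => this x), Finset.sum_ite_eq' Finset.univ (w 0)]
  simp only [Finset.mem_univ, if_true]
  apply Finset.prod_congr rfl
  intro l _
  rw [Fin.snoc_castSucc, snoc_head_succ]

lemma hankel_entry (N m : ℕ) (A : ℤ → Matrix (Fin m) (Fin m) ℝ)
    (x y : Fin N × Fin m) :
    (((exchP N) ⊗ₖ (1 : Matrix (Fin m) (Fin m) ℝ)) * blockToeplitz N m A) x y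
      = A ((N : ℤ) - 1 - (x.1 : ℤ) - (y.1 : ℤ)) x.2 y.2 := by
  obtain ⟨i, a⟩ := x
  obtain ⟨j, b⟩ := y
  have hN : 0 < N := i.pos
  rw [Matrix.mul_apply]
  rw [Fintype.sum_prod_type]
  have step : ∀ l : Fin N,
      (∑ c : Fin m, ((exchP N) ⊗ₖ (1 : Matrix (Fin m) (Fin m) ℝ)) (i, a) (l, c)
        * blockToeplitz N m A (l, c) (j, b))
      = (if (i : ℕ) + (l : ℕ) + 1 = N then 1 else 0) * A ((l : ℤ) - (j : ℤ)) a b := by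
    intro l
    simp only [Matrix.kroneckerMap_apply, blockToeplitz, exchP, Matrix.of_apply,
      Matrix.one_apply, mul_ite, mul_one, mul_zero, ite_mul, zero_mul]
    rw [Finset.sum_ite_eq Finset.univ a]
    simp
  rw [Finset.sum_congr rfl (fun l _ => step l)]
  -- now sum over l of indicator at l = N-1-i
  have hi : (i : ℕ) ≤ N - 1 := by omega
  rw [Finset.sum_eq_single (⟨N - 1 - (i : ℕ), by omega⟩ : Fin N)]
  · rw [if_pos (by simp; omega), one_mul]
    congr 2
    have hv : ((⟨N - 1 - (i : ℕ), by omega⟩ : Fin N) : ℕ) = N - 1 - (i:ℕ) := rfl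
    rw [hv]
    push_cast
    omega
  · intro l _ hl
    rw [if_neg, zero_mul]
    intro hc
    apply hl
    apply Fin.ext
    simp only []
    omega
  · simp



/-- extension of a `Fin k`-tuple of integers by zero -/
def jext (k : ℕ) (j : Fin k → ℤ) (t : ℕ) : ℤ := if h : t < k then j ⟨t, h⟩ else 0

/-- partial alternating sums -/
def Spart (k : ℕ) (j : Fin k → ℤ) (t : ℕ) : ℤ :=
  ∑ q ∈ Finset.range t, (-1 : ℤ) ^ (q + 1) * jext k j q

lemma Spart_succ (k : ℕ) (j : Fin k → ℤ) (t : ℕ) (ht : t < k) :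
    Spart k j (t + 1) = Spart k j t + (-1 : ℤ) ^ (t + 1) * j ⟨t, ht⟩ := by
  rw [Spart, Finset.sum_range_succ, ← Spart, jext, dif_pos ht]

lemma sum_Iic_eq_Spart (k : ℕ) (j : Fin k → ℤ) (l : Fin k) :
    (∑ q ∈ Finset.Iic l, (-1 : ℤ) ^ ((q : ℕ) + 1) * j q) = Spart k j (l.val + 1) := by
  rw [Spart]
  refine Finset.sum_nbij' (fun q => (q : ℕ))
    (fun t => if h : t < k then (⟨t, h⟩ : Fin k) else l) ?_ ?_ ?_ ?_ ?_
  · intro q hq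
    simp only [Finset.mem_Iic] at hq
    simp only [Finset.mem_range]
    omega
  · intro t ht
    simp only [Finset.mem_range] at ht
    simp only [dif_pos (by omega : t < k), Finset.mem_Iic]
    exact Fin.mk_le_of_le_val (by omega)
  · intro q _; simp [q.isLt]
  · intro t ht
    simp only [Finset.mem_range] at ht
    simp only [dif_pos (by omega : t < k)]
  · intro q _
    rw [jext, dif_pos q.isLt]

lemma sum_univ_eq_Spart (k : ℕ) (j : Fin k → ℤ) :
    (∑ q : Fin k, (-1 : ℤ) ^ ((q : ℕ) + 1) * j q) = Spart k j k := by
  rw [Spart, ← Fin.sum_univ_eq_sum_range]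
  apply Finset.sum_congr rfl
  intro q _
  rw [jext, dif_pos q.isLt]

lemma fin_add_one_val (k : ℕ) [NeZero k] (l : Fin k) :
    ((l + 1 : Fin k) : ℕ) = ((l : ℕ) + 1) % k := by
  have hk : 0 < k := Nat.pos_of_ne_zero (NeZero.ne k)
  simp only [Fin.add_def, Fin.val_one']
  conv_rhs => rw [Nat.add_mod]
  rw [Nat.add_mod (l : ℕ) (1 % k), Nat.mod_mod_of_dvd _ dvd_rfl]

/-- the `l`-th entry of the block-row sequence determined by a cyclic path `c` -/
def jv (N k : ℕ) [NeZero k] (c : Fin k → Fin N) : Fin k → ℤ :=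
  fun l => (N : ℤ) - 1 - (c l : ℤ) - (c (l + 1) : ℤ)

lemma claimP (N k : ℕ) [NeZero k] (c : Fin k → Fin N) :
    ∀ t, (ht : t ≤ k) →
      ((c 0 : ℤ) + 1) - Spart k (jv N k c) t
        = if Even t then (c ⟨t % k, Nat.mod_lt t (Nat.pos_of_ne_zero (NeZero.ne k))⟩ : ℤ) + 1
          else (N : ℤ) - (c ⟨t % k, Nat.mod_lt t (Nat.pos_of_ne_zero (NeZero.ne k))⟩ : ℤ) := by
  have hk : 0 < k := Nat.pos_of_ne_zero (NeZero.ne k)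
  intro t
  induction t with
  | zero =>
    intro _
    simp only [Spart, Finset.range_zero, Finset.sum_empty, Nat.zero_mod, Even.zero, if_true,
      sub_zero]
    congr 1
  | succ t ih =>
    intro ht
    have htk : t < k := by omega
    have ht' : t % k = t := Nat.mod_eq_of_lt htk
    have IH := ih (le_of_lt htk)
    rw [Spart_succ k _ t htk]
    have hjv : jv N k c ⟨t, htk⟩ = (N : ℤ) - 1 - (c ⟨t, htk⟩ : ℤ) - (c (⟨t, htk⟩ + 1) : ℤ) := rfl
    have hidx : ((⟨t, htk⟩ : Fin k) + 1 : Fin k)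
        = ⟨(t + 1) % k, Nat.mod_lt (t+1) hk⟩ := by
      apply Fin.ext
      rw [fin_add_one_val]
    have hmod : (⟨t % k, Nat.mod_lt t hk⟩ : Fin k) = ⟨t, htk⟩ := by
      apply Fin.ext; simpa using ht'
    rw [hmod] at IH
    rcases Nat.even_or_odd t with he | ho
    · have h1 : (-1 : ℤ) ^ (t + 1) = -1 := Odd.neg_one_pow (Even.add_one he)
      rw [if_pos he] at IH
      rw [if_neg (by simp [Nat.even_add_one, he])]
      rw [h1, hjv, hidx]
      rw [hidx] at *
      linarith [IH]
    · have h1 : (-1 : ℤ) ^ (t + 1) = 1 := (ho.add_one).neg_one_pow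
      rw [if_neg (by simp [Nat.not_even_iff_odd.mpr ho])] at IH
      rw [if_pos (Nat.even_add_one.mpr (Nat.not_even_iff_odd.mpr ho))]
      rw [h1, hjv, hidx]
      linarith [IH]

/-- reconstructed vertex value -/
def Vt (N : ℕ) (k : ℕ) (i : ℤ) (j : Fin k → ℤ) (t : ℕ) : ℤ :=
  if Even t then i - Spart k j t - 1 else (N : ℤ) - (i - Spart k j t)

lemma keybij (N k : ℕ) (hN : 0 < N) [NeZero k] (hk : Even k) (F : (Fin k → ℤ) → ℝ) :
    (∑ c : Fin k → Fin N, F (jv N k c))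
      = ∑ i ∈ Finset.Icc (1 : ℤ) N,
          ∑ j ∈ Fintype.piFinset (fun _ : Fin k => Finset.Icc (-(N : ℤ) + 1) ((N : ℤ) - 1)),
            F j
            * (∏ l : Fin k,
                if (1 : ℤ) ≤ i - Spart k j ((l : ℕ) + 1) ∧ i - Spart k j ((l : ℕ) + 1) ≤ N
                then (1 : ℝ) else 0)
            * (if Spart k j k = 0 then (1 : ℝ) else 0) := by
  classical
  have hkpos : 0 < k := Nat.pos_of_ne_zero (NeZero.ne k)
  rw [← Finset.sum_product']
  set D := (Finset.Icc (1 : ℤ) (N : ℤ)) ×ˢ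
    (Fintype.piFinset (fun _ : Fin k => Finset.Icc (-(N : ℤ) + 1) ((N : ℤ) - 1))) with hD
  set G : ℤ × (Fin k → ℤ) → ℝ := fun p =>
    F p.2
    * (∏ l : Fin k,
        if (1 : ℤ) ≤ p.1 - Spart k p.2 ((l : ℕ) + 1) ∧ p.1 - Spart k p.2 ((l : ℕ) + 1) ≤ N
        then (1 : ℝ) else 0)
    * (if Spart k p.2 k = 0 then (1 : ℝ) else 0) with hG
  set Cond : ℤ × (Fin k → ℤ) → Prop := fun p =>
    (∀ l : Fin k, (1 : ℤ) ≤ p.1 - Spart k p.2 ((l : ℕ) + 1)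
        ∧ p.1 - Spart k p.2 ((l : ℕ) + 1) ≤ N) ∧ Spart k p.2 k = 0 with hCond
  rw [← Finset.sum_filter_of_ne (p := Cond) (f := G) ?hne]
  case hne =>
    intro p _ hne
    by_contra hnc
    rw [hCond] at hnc
    apply hne
    rcases Classical.em (∀ l : Fin k, (1 : ℤ) ≤ p.1 - Spart k p.2 ((l : ℕ) + 1)
        ∧ p.1 - Spart k p.2 ((l : ℕ) + 1) ≤ N) with hall | hnall
    · have hB : ¬ Spart k p.2 k = 0 := fun hB => hnc ⟨hall, hB⟩
      rw [hG]
      simp only [if_neg hB, mul_zero]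
    · push_neg at hnall
      obtain ⟨l, hl⟩ := hnall
      rw [hG]
      simp only []
      have hfac : (if (1:ℤ) ≤ p.1 - Spart k p.2 ((l:ℕ)+1) ∧ p.1 - Spart k p.2 ((l:ℕ)+1) ≤ N
          then (1:ℝ) else 0) = 0 := by
        rw [if_neg]; push_neg; exact hl
      rw [Finset.prod_eq_zero (Finset.mem_univ l) hfac]
      simp
  -- main bijection
  refine Finset.sum_nbij' (fun c => (((c 0 : ℕ) : ℤ) + 1, jv N k c))
    (fun p => fun l => (⟨(Vt N k p.1 p.2 (l : ℕ)).toNat % N, Nat.mod_lt _ hN⟩ : Fin N))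
    ?_ ?_ ?_ ?_ ?_
  · -- maps into the filtered set
    intro c _
    rw [Finset.mem_filter]
    refine ⟨?_, ?_⟩
    · rw [hD, Finset.mem_product]
      constructor
      · simp only [Finset.mem_Icc]
        have := (c 0).isLt
        omega
      · rw [Fintype.mem_piFinset]
        intro l
        simp only [Finset.mem_Icc, jv]
        have h1 := (c l).isLt
        have h2 := (c (l + 1)).isLt
        omega
    · rw [hCond]
      constructor
      · intro l
        have hP := claimP N k c ((l : ℕ) + 1) (by have := l.isLt; omega)
        simp only []
        rw [hP]
        split_ifs with h
        · have := (c ⟨((l:ℕ)+1) % k, Nat.mod_lt _ hkpos⟩).isLt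
          omega
        · have := (c ⟨((l:ℕ)+1) % k, Nat.mod_lt _ hkpos⟩).isLt
          omega
      · have hP := claimP N k c k le_rfl
        have h0 : (⟨k % k, Nat.mod_lt k hkpos⟩ : Fin k) = 0 := by
          apply Fin.ext; simp [Nat.mod_self]
        rw [if_pos hk, h0] at hP
        simp only []
        omega
  · intro p _; exact Finset.mem_univ _
  · -- left inverse
    intro c _
    funext l
    apply Fin.ext
    have hP := claimP N k c (l : ℕ) (le_of_lt l.isLt)
    have hl' : (⟨(l : ℕ) % k, Nat.mod_lt _ hkpos⟩ : Fin k) = l := by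
      apply Fin.ext; simp [Nat.mod_eq_of_lt l.isLt]
    rw [hl'] at hP
    have hV : Vt N k (((c 0 : ℕ) : ℤ) + 1) (jv N k c) (l : ℕ) = ((c l : ℕ) : ℤ) := by
      rw [Vt]
      split_ifs with h
      · rw [if_pos h] at hP; omega
      · rw [if_neg h] at hP; omega
    simp only [hV, Int.toNat_natCast]
    exact Nat.mod_eq_of_lt (c l).isLt
  · -- right inverse
    intro p hp
    obtain ⟨hpD, hpC⟩ := Finset.mem_filter.mp hp
    rw [hD, Finset.mem_product] at hpD
    obtain ⟨hp1, hp2⟩ := hpD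
    rw [Finset.mem_Icc] at hp1
    rw [hCond] at hpC
    obtain ⟨hpI, hpS⟩ := hpC
    have hS0 : Spart k p.2 0 = 0 := by simp [Spart]
    have hVb : ∀ t, t < k → 0 ≤ Vt N k p.1 p.2 t ∧ Vt N k p.1 p.2 t < N := by
      intro t ht
      rcases Nat.eq_zero_or_pos t with rfl | htpos
      · rw [Vt, if_pos Even.zero, hS0]
        omega
      · have hb := hpI ⟨t - 1, by omega⟩
        have hco : ((⟨t - 1, by omega⟩ : Fin k) : ℕ) + 1 = t := by simp; omega
        rw [hco] at hb
        rw [Vt]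
        split_ifs with h <;> omega
    have hcv : ∀ t, t < k →
        (((Vt N k p.1 p.2 t).toNat % N : ℕ) : ℤ) = Vt N k p.1 p.2 t := by
      intro t ht
      obtain ⟨hb1, hb2⟩ := hVb t ht
      rw [Nat.mod_eq_of_lt (by omega : (Vt N k p.1 p.2 t).toNat < N)]
      omega
    have hV0 : Vt N k p.1 p.2 0 = p.1 - 1 := by
      rw [Vt, if_pos Even.zero, hS0]; ring
    apply Prod.ext
    · simp only [Fin.val_zero]
      rw [hcv 0 hkpos, hV0]
      ring
    · simp only []
      funext l
      rw [jv]
      simp only [Fin.val_mk]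
      have hl1 := hcv (l : ℕ) l.isLt
      have hrec := Spart_succ k p.2 (l : ℕ) l.isLt
      have hmk : (⟨(l : ℕ), l.isLt⟩ : Fin k) = l := by apply Fin.ext; rfl
      rw [hmk] at hrec
      by_cases hlast : (l : ℕ) + 1 < k
      · have hadd : ((l + 1 : Fin k) : ℕ) = (l : ℕ) + 1 := by
          rw [fin_add_one_val]; exact Nat.mod_eq_of_lt hlast
        have hl2 := hcv ((l + 1 : Fin k) : ℕ) (l + 1).isLt
        rw [hadd] at hl2
        rw [hadd, hl1, hl2]
        rcases Nat.even_or_odd (l : ℕ) with he | ho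
        · have hpow : (-1 : ℤ) ^ ((l : ℕ) + 1) = -1 := Odd.neg_one_pow (Even.add_one he)
          rw [Vt, Vt, if_pos he, if_neg (by simp [Nat.even_add_one, he]), hrec, hpow]
          ring
        · have hpow : (-1 : ℤ) ^ ((l : ℕ) + 1) = 1 := Even.neg_one_pow (Odd.add_one ho)
          rw [Vt, Vt, if_neg (Nat.not_even_iff_odd.mpr ho),
            if_pos (Nat.even_add_one.mpr (Nat.not_even_iff_odd.mpr ho)), hrec, hpow]
          ring
      · have hlv : (l : ℕ) + 1 = k := by have := l.isLt; omega
        have hzero : (l + 1 : Fin k) = 0 := by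
          apply Fin.ext
          rw [fin_add_one_val, hlv, Nat.mod_self]
          rfl
        have hek : Even ((l : ℕ) + 1) := by rw [hlv]; exact hk
        have hodd : ¬ Even (l : ℕ) := Nat.even_add_one.mp hek
        have hl0 := (hcv 0 hkpos).trans hV0
        have hadd : ((l + 1 : Fin k) : ℕ) = 0 := by
          rw [fin_add_one_val, hlv, Nat.mod_self]
        rw [hadd, hl0, hl1]
        have hpow : (-1 : ℤ) ^ k = 1 := Even.neg_one_pow hk
        rw [hlv, hpow] at hrec
        rw [Vt, if_neg hodd]
        rw [hpS] at hrec
        linarith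
  · -- summand equality
    intro c _
    rw [hG]
    simp only []
    have hS0 : Spart k (jv N k c) k = 0 := by
      have hP := claimP N k c k le_rfl
      have h0 : (⟨k % k, Nat.mod_lt k hkpos⟩ : Fin k) = 0 := by
        apply Fin.ext; simp [Nat.mod_self]
      rw [if_pos hk, h0] at hP
      omega
    rw [if_pos hS0]
    have hprod : (∏ l : Fin k,
        if (1 : ℤ) ≤ ((c 0 : ℕ) : ℤ) + 1 - Spart k (jv N k c) ((l : ℕ) + 1)
            ∧ ((c 0 : ℕ) : ℤ) + 1 - Spart k (jv N k c) ((l : ℕ) + 1) ≤ N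
        then (1 : ℝ) else 0) = 1 := by
      apply Finset.prod_eq_one
      intro l _
      rw [if_pos]
      have hP := claimP N k c ((l : ℕ) + 1) (by have := l.isLt; omega)
      rw [hP]
      split_ifs with h
      · have := (c ⟨((l:ℕ)+1) % k, Nat.mod_lt _ hkpos⟩).isLt
        omega
      · have := (c ⟨((l:ℕ)+1) % k, Nat.mod_lt _ hkpos⟩).isLt
        omega
    rw [hprod, mul_one, mul_one]

/-- Trace formula for even powers of the block Hankel matrix `H = Φ T`,
where `Φ = P ⊗ I_m` and `T` is the block Toeplitz matrix with blocks `A_{i-j}`. -/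
theorem trace_pow_blockHankel_even (N m k : ℕ) (hN : 0 < N) (hk : Even k)
    (A : ℤ → Matrix (Fin m) (Fin m) ℝ)
    (H : Matrix (Fin N × Fin m) (Fin N × Fin m) ℝ)
    (hH : H = ((exchP N) ⊗ₖ (1 : Matrix (Fin m) (Fin m) ℝ)) * blockToeplitz N m A) :
    (H ^ k).trace =
      ∑ i ∈ Finset.Icc (1 : ℤ) N,
        ∑ j ∈ Fintype.piFinset (fun _ : Fin k => Finset.Icc (-(N : ℤ) + 1) ((N : ℤ) - 1)),
          ((List.ofFn fun l => A (j l)).prod).trace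
          * (∏ l : Fin k,
              if (1 : ℤ) ≤ i - (∑ q ∈ Finset.Iic l, (-1 : ℤ) ^ ((q : ℕ) + 1) * j q)
                  ∧ i - (∑ q ∈ Finset.Iic l, (-1 : ℤ) ^ ((q : ℕ) + 1) * j q) ≤ N
              then (1 : ℝ) else 0)
          * (if (∑ q : Fin k, (-1 : ℤ) ^ ((q : ℕ) + 1) * j q) = 0 then (1 : ℝ) else 0) := by
  rcases Nat.eq_zero_or_pos k with rfl | hkpos
  · -- k = 0
    simp only [pow_zero, Matrix.trace_one]
    simp [List.ofFn_zero, Matrix.trace_one, Finset.sum_const, Int.card_Icc]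
  · haveI : NeZero k := ⟨by omega⟩
    have hHe : ∀ x y : Fin N × Fin m, H x y
        = A ((N : ℤ) - 1 - (x.1 : ℤ) - (y.1 : ℤ)) x.2 y.2 := fun x y => by
      rw [hH]; exact hankel_entry N m A x y
    have hpow : H ^ k = (List.ofFn fun _ : Fin k => H).prod := by
      rw [List.ofFn_const, List.prod_replicate]
    rw [hpow, trace_listProd]
    simp only [sum_Iic_eq_Spart, sum_univ_eq_Spart]
    have hR : ∀ j : Fin k → ℤ, ((List.ofFn fun l => A (j l)).prod).trace
        = ∑ a : Fin k → Fin m, ∏ l : Fin k, A (j l) (a l) (a (l + 1)) :=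
      fun j => trace_listProd k _
    simp only [hR]
    rw [← keybij N k hN hk
      (fun j => ∑ a : Fin k → Fin m, ∏ l : Fin k, A (j l) (a l) (a (l + 1)))]
    rw [← Equiv.sum_comp ((Equiv.arrowProdEquivProdArrow (Fin k) (fun _ => Fin N) (fun _ => Fin m)).symm)]
    rw [Fintype.sum_prod_type]
    apply Finset.sum_congr rfl
    intro c _
    apply Finset.sum_congr rfl
    intro a _
    apply Finset.prod_congr rfl
    intro l _
    simp only [Equiv.arrowProdEquivProdArrow, Equiv.symm, Equiv.coe_fn_mk, hHe, jv]
end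

section
/- For any noncrossing pair partition π of {1,...,2k}, ∫_{[0,1]×[−1,1]^k} Π_{j=1}^{2k} 1_{[0,1]}(x_0 + Σ_{q=1}^j ε_π(q) x_{π(q)}) dx_0 dx_1 ··· dx_k = 1, where ε_π(q) = +1 if q is the smaller element of its block and −1 otherwise, and π(q) is the label of the block containing q (blocks labeled 1,...,k). -/
open Matrix MeasureTheory
open scoped Kronecker BigOperators

noncomputable section

/-- the label of the block containing `q` -/
def blk {k : ℕ} {a b : Fin k → Fin (2*k)} (h : IsPairPart k a b) (q : Fin (2*k)) : Fin k :=
  (h.2.2.2 q).choose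

/-- `ε_π(q) = 1` if `q` is the smaller element of its block, `-1` otherwise -/
def eps {k : ℕ} {a b : Fin k → Fin (2*k)} (h : IsPairPart k a b) (q : Fin (2*k)) : ℝ :=
  if q = a (blk h q) then 1 else -1

/-- `I(π) = ∫_{[0,1]×[-1,1]^k} ∏_{j=1}^{2k} 1_{[0,1]}(x_0 + Σ_{q=1}^j ε_π(q) x_{π(q)}) dx` -/
def ppIntegral {k : ℕ} {a b : Fin k → Fin (2*k)} (h : IsPairPart k a b) : ℝ :=
  ∫ x in Set.univ.pi
      (fun l : Fin (k+1) => if l = 0 then Set.Icc (0:ℝ) 1 else Set.Icc (-1) 1),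
    ∏ j : Fin (2*k), Set.indicator (Set.Icc (0:ℝ) 1) (fun _ => (1:ℝ))
      (x 0 + ∑ q ∈ Finset.Iic j, eps h q * x (blk h q).succ)

/-- the `2k`-th moment of `γ_T^{(m)}`:
`m_{2k} = Σ_{π ∈ P₂(2k)} m^{k-1-f(π)} I(π)`. -/
def mom (m k : ℕ) : ℝ :=
  ∑ p : PP k, (m : ℝ) ^ ((k : ℤ) - 1 - (fRank p.1.1 p.1.2 : ℤ)) * ppIntegral p.2

end

section NCProof

variable {k : ℕ} {a b : Fin k → Fin (2*k)}

lemma blk_spec (h : IsPairPart k a b) (q : Fin (2*k)) :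
    q = a (blk h q) ∨ q = b (blk h q) := (h.2.2.2 q).choose_spec

lemma blk_a (h : IsPairPart k a b) (i : Fin k) : blk h (a i) = i := by
  rcases blk_spec h (a i) with hq | hq
  · by_contra hne
    exact (h.2.2.1 i (blk h (a i)) (fun e => hne e.symm)).1 hq
  · by_cases he : blk h (a i) = i
    · rw [he] at hq; exact absurd hq (h.1 i).ne
    · exact absurd hq (h.2.2.1 i (blk h (a i)) (fun e => he e.symm)).2.1

lemma blk_b (h : IsPairPart k a b) (i : Fin k) : blk h (b i) = i := by
  rcases blk_spec h (b i) with hq | hq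
  · by_cases he : blk h (b i) = i
    · rw [he] at hq; exact absurd hq.symm (h.1 i).ne
    · exact absurd hq.symm (h.2.2.1 (blk h (b i)) i he).2.1
  · by_contra hne
    exact (h.2.2.1 i (blk h (b i)) (fun e => hne e.symm)).2.2 hq

lemma eps_a (h : IsPairPart k a b) (i : Fin k) : eps h (a i) = 1 := by
  rw [eps, if_pos]; rw [blk_a]

lemma eps_b (h : IsPairPart k a b) (i : Fin k) : eps h (b i) = -1 := by
  rw [eps, if_neg]; rw [blk_b]; exact (h.1 i).ne'

/-- the partner of `q` in its block -/
noncomputable def partner (h : IsPairPart k a b) (q : Fin (2*k)) : Fin (2*k) :=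
  if q = a (blk h q) then b (blk h q) else a (blk h q)

lemma partner_of_a (h : IsPairPart k a b) (i : Fin k) : partner h (a i) = b i := by
  rw [partner, blk_a, if_pos rfl]

lemma partner_of_b (h : IsPairPart k a b) (i : Fin k) : partner h (b i) = a i := by
  rw [partner, blk_b, if_neg (h.1 i).ne']

lemma partner_cases (h : IsPairPart k a b) (q : Fin (2*k)) :
    (q = a (blk h q) ∧ partner h q = b (blk h q)) ∨
    (q = b (blk h q) ∧ partner h q = a (blk h q)) := by
  rcases blk_spec h q with hq | hq
  · exact Or.inl ⟨hq, by rw [partner, if_pos hq]⟩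
  · refine Or.inr ⟨hq, ?_⟩
    rw [partner, if_neg]
    intro e; exact (h.1 (blk h q)).ne (e.symm.trans hq)

lemma blk_partner (h : IsPairPart k a b) (q : Fin (2*k)) :
    blk h (partner h q) = blk h q := by
  rcases partner_cases h q with ⟨_, hp⟩ | ⟨_, hp⟩
  · rw [hp, blk_b]
  · rw [hp, blk_a]

lemma partner_partner (h : IsPairPart k a b) (q : Fin (2*k)) :
    partner h (partner h q) = q := by
  rcases partner_cases h q with ⟨hq, hp⟩ | ⟨hq, hp⟩
  · rw [hp, partner_of_b, ← hq]
  · rw [hp, partner_of_a, ← hq]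

lemma partner_ne (h : IsPairPart k a b) (q : Fin (2*k)) : partner h q ≠ q := by
  rcases partner_cases h q with ⟨hq, hp⟩ | ⟨hq, hp⟩
  · rw [hp]; intro e; exact (h.1 _).ne' (e.trans hq)
  · rw [hp]; intro e; exact (h.1 _).ne (e.trans hq)

lemma eps_add_eps_partner (h : IsPairPart k a b) (q : Fin (2*k)) :
    eps h q + eps h (partner h q) = 0 := by
  rcases partner_cases h q with ⟨hq, hp⟩ | ⟨hq, hp⟩
  · rw [hp, eps_b, eps, if_pos hq]; ring
  · rw [hp, eps_a, eps, if_neg]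
    · ring
    · intro e; exact (h.1 (blk h q)).ne (e.symm.trans hq)

/-- partial sum up to and including `j` -/
noncomputable def psum (h : IsPairPart k a b) (x : Fin (k+1) → ℝ) (j : Fin (2*k)) : ℝ :=
  x 0 + ∑ q ∈ Finset.Iic j, eps h q * x (blk h q).succ

/-- partial sum strictly before `j` -/
noncomputable def presum (h : IsPairPart k a b) (x : Fin (k+1) → ℝ) (j : Fin (2*k)) : ℝ :=
  x 0 + ∑ q ∈ Finset.Iio j, eps h q * x (blk h q).succ

lemma psum_eq_presum_add (h : IsPairPart k a b) (x : Fin (k+1) → ℝ) (j : Fin (2*k)) :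
    psum h x j = presum h x j + eps h j * x (blk h j).succ := by
  rw [psum, presum, ← Finset.Iio_insert, Finset.sum_insert (by simp)]
  ring

lemma presum_zero (h : IsPairPart k a b) (x : Fin (k+1) → ℝ) (j : Fin (2*k))
    (hj : j.val = 0) : presum h x j = x 0 := by
  have he : Finset.Iio j = ∅ := by
    ext q; simp [Fin.lt_def, hj]
  rw [presum, he, Finset.sum_empty, add_zero]

lemma presum_succ (h : IsPairPart k a b) (x : Fin (k+1) → ℝ) (j : Fin (2*k)) (t : ℕ)
    (ht : j.val = t + 1) : presum h x j = psum h x ⟨t, by omega⟩ := by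
  have he : Finset.Iio j = Finset.Iic (⟨t, by omega⟩ : Fin (2*k)) := by
    ext q; simp only [Finset.mem_Iio, Finset.mem_Iic, Fin.lt_def, Fin.le_def, ht]
    omega
  rw [presum, psum, he]

lemma partner_mem_Icc (h : IsPairPart k a b) (hnc : Noncross a b) {i : Fin k}
    {q : Fin (2*k)} (hq : q ∈ Finset.Icc (a i) (b i)) :
    partner h q ∈ Finset.Icc (a i) (b i) := by
  rw [Finset.mem_Icc] at hq ⊢
  rcases partner_cases h q with ⟨hqa, hp⟩ | ⟨hqb, hp⟩
  · set m := blk h q with hm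
    rw [hp]
    by_cases he : m = i
    · rw [he]; exact ⟨(h.1 i).le, le_refl _⟩
    · have h1 : a i < a m := lt_of_le_of_ne (hqa ▸ hq.1) (h.2.2.1 i m (fun e => he e.symm)).1
      have h2 : a m < b i := lt_of_le_of_ne (hqa ▸ hq.2) (h.2.2.1 m i he).2.1
      have h3 : ¬ b i < b m := fun hlt => hnc ⟨i, m, h1, h2, hlt⟩
      exact ⟨(h1.trans (h.1 m)).le, le_of_not_gt h3⟩
  · set m := blk h q with hm
    rw [hp]
    by_cases he : m = i
    · rw [he]; exact ⟨le_refl _, (h.1 i).le⟩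
    · have h1 : a i < b m := lt_of_le_of_ne (hqb ▸ hq.1) (h.2.2.1 i m (fun e => he e.symm)).2.1
      have h2 : b m < b i := lt_of_le_of_ne (hqb ▸ hq.2) (h.2.2.1 m i he).2.2
      have h3 : ¬ a m < a i := fun hlt => hnc ⟨m, i, hlt, h1, h2⟩
      exact ⟨le_of_not_gt h3, ((h.1 m).le.trans h2.le)⟩

lemma sum_Icc_zero (h : IsPairPart k a b) (hnc : Noncross a b)
    (x : Fin (k+1) → ℝ) (i : Fin k) :
    ∑ q ∈ Finset.Icc (a i) (b i), eps h q * x (blk h q).succ = 0 := by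
  apply Finset.sum_involution (fun q _ => partner h q)
  · intro q _
    rw [blk_partner]
    rw [← add_mul, eps_add_eps_partner, zero_mul]
  · intro q _ _; exact partner_ne h q
  · intro q hq; exact partner_mem_Icc h hnc hq
  · intro q _; exact partner_partner h q

lemma psum_b (h : IsPairPart k a b) (hnc : Noncross a b) (x : Fin (k+1) → ℝ) (i : Fin k) :
    psum h x (b i) = presum h x (a i) := by
  have hab := h.1 i
  rw [Fin.lt_def] at hab
  have hsplit : Finset.Iic (b i) = Finset.Iio (a i) ∪ Finset.Icc (a i) (b i) := by
    ext q
    simp only [Finset.mem_Iic, Finset.mem_Iio, Finset.mem_Icc, Finset.mem_union,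
      Fin.lt_def, Fin.le_def]
    omega
  have hdisj : Disjoint (Finset.Iio (a i)) (Finset.Icc (a i) (b i)) := by
    rw [Finset.disjoint_left]
    intro q hq1 hq2
    rw [Finset.mem_Iio] at hq1
    rw [Finset.mem_Icc] at hq2
    exact absurd hq2.1 (not_le_of_gt hq1)
  rw [psum, presum, hsplit, Finset.sum_union hdisj, sum_Icc_zero h hnc, add_zero]

lemma psum_mem (h : IsPairPart k a b) (hnc : Noncross a b) {x : Fin (k+1) → ℝ}
    (h0 : x 0 ∈ Set.Icc (0:ℝ) 1) (hS : ∀ i, psum h x (a i) ∈ Set.Icc (0:ℝ) 1) :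
    ∀ j, psum h x j ∈ Set.Icc (0:ℝ) 1 := by
  have H : ∀ n : ℕ, ∀ j : Fin (2*k), j.val ≤ n → psum h x j ∈ Set.Icc (0:ℝ) 1 := by
    intro n
    induction n with
    | zero =>
      intro j hj
      rcases h.2.2.2 j with ⟨i, hi | hi⟩
      · rw [hi]; exact hS i
      · exfalso
        have := h.1 i
        rw [Fin.lt_def] at this
        rw [hi] at hj
        omega
    | succ n ih =>
      intro j hj
      rcases h.2.2.2 j with ⟨i, hi | hi⟩
      · rw [hi]; exact hS i
      · rw [hi, psum_b h hnc]
        rcases Nat.eq_zero_or_eq_succ_pred (a i).val with h0' | h1'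
        · rw [presum_zero h x (a i) h0']; exact h0
        · rw [presum_succ h x (a i) ((a i).val - 1) h1']
          apply ih
          show (a i).val - 1 ≤ n
          have hlt := h.1 i
          rw [Fin.lt_def] at hlt
          rw [hi] at hj
          omega
  intro j; exact H j.val j (le_refl _)

lemma presum_mem (h : IsPairPart k a b) (hnc : Noncross a b) {x : Fin (k+1) → ℝ}
    (h0 : x 0 ∈ Set.Icc (0:ℝ) 1) (hS : ∀ i, psum h x (a i) ∈ Set.Icc (0:ℝ) 1) :
    ∀ j, presum h x j ∈ Set.Icc (0:ℝ) 1 := by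
  intro j
  rcases Nat.eq_zero_or_eq_succ_pred j.val with h0' | h1'
  · rw [presum_zero h x j h0']; exact h0
  · rw [presum_succ h x j (j.val - 1) h1']
    exact psum_mem h hnc h0 hS _

lemma coord_mem (h : IsPairPart k a b) (hnc : Noncross a b) {x : Fin (k+1) → ℝ}
    (h0 : x 0 ∈ Set.Icc (0:ℝ) 1) (hS : ∀ i, psum h x (a i) ∈ Set.Icc (0:ℝ) 1)
    (i : Fin k) : x i.succ ∈ Set.Icc (-1:ℝ) 1 := by
  have e1 := psum_eq_presum_add h x (a i)
  rw [eps_a, blk_a, one_mul] at e1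
  have h1 := hS i
  have h2 := presum_mem h hnc h0 hS (a i)
  rw [Set.mem_Icc] at h1 h2 ⊢
  constructor <;> linarith

/-- coefficient of `x m` in `psum h x j` -/
noncomputable def coeff (h : IsPairPart k a b) (j : Fin (2*k)) : Fin (k+1) → ℝ :=
  Fin.cases 1 (fun m => ∑ q ∈ (Finset.Iic j).filter (fun q => blk h q = m), eps h q)

lemma psum_eq_sum_coeff (h : IsPairPart k a b) (x : Fin (k+1) → ℝ) (j : Fin (2*k)) :
    psum h x j = ∑ m, coeff h j m * x m := by
  rw [Fin.sum_univ_succ]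
  simp only [coeff, Fin.cases_zero, Fin.cases_succ, one_mul]
  rw [psum]
  congr 1
  have step : ∀ m : Fin k,
      (∑ q ∈ (Finset.Iic j).filter (fun q => blk h q = m), eps h q) * x m.succ
        = ∑ q ∈ (Finset.Iic j).filter (fun q => blk h q = m),
            eps h q * x (blk h q).succ := by
    intro m
    rw [Finset.sum_mul]
    apply Finset.sum_congr rfl
    intro q hq
    rw [Finset.mem_filter] at hq
    rw [hq.2]
  rw [Finset.sum_congr rfl (fun m _ => step m)]
  exact (Finset.sum_fiberwise_of_maps_to (t := (Finset.univ : Finset (Fin k)))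
    (g := fun q => blk h q) (fun q _ => Finset.mem_univ _)
    (fun q => eps h q * x (blk h q).succ)).symm

/-- the triangular transition matrix -/
noncomputable def Tmat (h : IsPairPart k a b) : Matrix (Fin (k+1)) (Fin (k+1)) ℝ :=
  Matrix.of (Fin.cases (fun m => if m = 0 then 1 else 0) (fun i => coeff h (a i)))

lemma mulVec_Tmat (h : IsPairPart k a b) (x : Fin (k+1) → ℝ) (l : Fin (k+1)) :
    (Tmat h).mulVec x l = Fin.cases (x 0) (fun i => psum h x (a i)) l := by
  induction l using Fin.cases with
  | zero =>
    simp only [Tmat, Matrix.mulVec, dotProduct, Matrix.of_apply, Fin.cases_zero,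
      ite_mul, one_mul, zero_mul, Finset.sum_ite_eq', Finset.mem_univ, if_true]
  | succ i =>
    simp only [Tmat, Matrix.mulVec, dotProduct, Matrix.of_apply, Fin.cases_succ]
    rw [← psum_eq_sum_coeff]

lemma coeff_zero_of_lt (h : IsPairPart k a b) {i m : Fin k} (him : i < m) :
    coeff h (a i) m.succ = 0 := by
  simp only [coeff, Fin.cases_succ]
  apply Finset.sum_eq_zero
  intro q hq
  exfalso
  rw [Finset.mem_filter, Finset.mem_Iic] at hq
  have ham : a i < a m := h.2.1 i m him
  rcases blk_spec h q with e | e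
  · rw [hq.2] at e
    rw [e] at hq
    exact absurd hq.1 (not_le_of_gt ham)
  · rw [hq.2] at e
    rw [e] at hq
    exact absurd hq.1 (not_le_of_gt (ham.trans (h.1 m)))

lemma coeff_diag (h : IsPairPart k a b) (i : Fin k) : coeff h (a i) i.succ = 1 := by
  simp only [coeff, Fin.cases_succ]
  have hfil : (Finset.Iic (a i)).filter (fun q => blk h q = i) = {a i} := by
    ext q
    rw [Finset.mem_filter, Finset.mem_Iic, Finset.mem_singleton]
    constructor
    · rintro ⟨hq1, hq2⟩
      rcases blk_spec h q with e | e
      · rw [hq2] at e; exact e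
      · rw [hq2] at e
        exfalso
        exact absurd hq1 (not_le_of_gt (e ▸ h.1 i))
    · rintro rfl
      exact ⟨le_refl _, blk_a h i⟩
  rw [hfil, Finset.sum_singleton, eps_a]

lemma Tmat_lowerTriangular (h : IsPairPart k a b) :
    ∀ l m : Fin (k+1), l < m → Tmat h l m = 0 := by
  intro l m hlm
  induction l using Fin.cases with
  | zero =>
    have : m ≠ 0 := Fin.pos_iff_ne_zero.1 hlm
    simp [Tmat, this]
  | succ i =>
    have hm0 : m ≠ 0 := by
      intro e; rw [e] at hlm; exact absurd hlm (Fin.not_lt_zero _).elim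
    obtain ⟨m', rfl⟩ := Fin.eq_succ_of_ne_zero hm0
    have him : i < m' := by
      rwa [Fin.succ_lt_succ_iff] at hlm
    simp only [Tmat, Matrix.of_apply, Fin.cases_succ]
    exact coeff_zero_of_lt h him

lemma Tmat_det (h : IsPairPart k a b) : (Tmat h).det = 1 := by
  rw [Matrix.det_of_lowerTriangular (Tmat h)
    (fun i j hij => Tmat_lowerTriangular h i j hij)]
  rw [Fin.prod_univ_succ]
  have h0 : Tmat h 0 0 = 1 := by simp [Tmat]
  rw [h0, one_mul]
  apply Finset.prod_eq_one
  intro i _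
  show Tmat h i.succ i.succ = 1
  simp only [Tmat, Matrix.of_apply, Fin.cases_succ]
  exact coeff_diag h i

lemma measurable_psum (h : IsPairPart k a b) (j : Fin (2*k)) :
    Measurable (fun x : Fin (k+1) → ℝ => psum h x j) := by
  unfold psum
  refine Measurable.add (f := fun x : Fin (k+1) → ℝ => x 0)
    (g := fun x : Fin (k+1) → ℝ => ∑ q ∈ Finset.Iic j, eps h q * x (blk h q).succ) ?_ ?_
  · exact measurable_pi_apply 0
  · exact Finset.measurable_sum _ (fun q _ => by exact (show Measurable (fun x : Fin (k+1) → ℝ => x (blk h q).succ) from measurable_pi_apply _).const_mul (eps h q))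

lemma volume_constraint_set (h : IsPairPart k a b) (hnc : Noncross a b) :
    volume ((Set.univ.pi
        (fun l : Fin (k+1) => if l = 0 then Set.Icc (0:ℝ) 1 else Set.Icc (-1) 1)) ∩
      {x : Fin (k+1) → ℝ | ∀ j, psum h x j ∈ Set.Icc (0:ℝ) 1}) = 1 := by
  set B := Set.univ.pi
      (fun l : Fin (k+1) => if l = 0 then Set.Icc (0:ℝ) 1 else Set.Icc (-1) 1) with hB
  set C := {x : Fin (k+1) → ℝ | ∀ j, psum h x j ∈ Set.Icc (0:ℝ) 1} with hC
  set Q := Set.univ.pi (fun _ : Fin (k+1) => Set.Icc (0:ℝ) 1) with hQ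
  have hBC : B ∩ C = (Matrix.toLin' (Tmat h)) ⁻¹' Q := by
    ext x
    simp only [Set.mem_inter_iff, Set.mem_preimage, hB, hC, hQ, Set.mem_pi, Set.mem_univ,
      forall_true_left, Set.mem_setOf_eq, Matrix.toLin'_apply]
    constructor
    · rintro ⟨hxB, hxC⟩
      intro l
      rw [mulVec_Tmat]
      induction l using Fin.cases with
      | zero =>
        have := hxB 0
        rw [if_pos rfl] at this
        simpa using this
      | succ i =>
        simpa using hxC (a i)
    · intro hx
      have h0 : x 0 ∈ Set.Icc (0:ℝ) 1 := by
        have := hx 0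
        rw [mulVec_Tmat] at this
        simpa using this
      have hS : ∀ i, psum h x (a i) ∈ Set.Icc (0:ℝ) 1 := by
        intro i
        have := hx i.succ
        rw [mulVec_Tmat] at this
        simpa using this
      constructor
      · intro l
        induction l using Fin.cases with
        | zero => rw [if_pos rfl]; exact h0
        | succ i =>
          rw [if_neg (Fin.succ_ne_zero i)]
          exact coord_mem h hnc h0 hS i
      · exact psum_mem h hnc h0 hS
  rw [hBC]
  have hQm : MeasurableSet Q := MeasurableSet.univ_pi (fun l => measurableSet_Icc)
  have hTm : Measurable (Matrix.toLin' (Tmat h)) :=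
    (Matrix.toLin' (Tmat h)).continuous_of_finiteDimensional.measurable
  have hmap := Real.map_matrix_volume_pi_eq_smul_volume_pi
    (M := Tmat h) (by rw [Tmat_det h]; exact one_ne_zero)
  rw [← Measure.map_apply hTm hQm, hmap, Tmat_det h]
  simp only [abs_one, inv_one, ENNReal.ofReal_one, one_smul]
  rw [hQ, volume_pi_pi]
  simp [Real.volume_Icc]

end NCProof

/-- For a noncrossing pair partition, the integral `I(π)` equals `1`. -/
theorem ppIntegral_eq_one_of_noncross (k : ℕ) (hk : 1 ≤ k) (p : PP k)
    (hnc : Noncross p.1.1 p.1.2) :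
    ppIntegral p.2 = 1 := by
  obtain ⟨⟨a, b⟩, h⟩ := p
  have hnc' : Noncross a b := hnc
  set C := {x : Fin (k+1) → ℝ | ∀ j, psum h x j ∈ Set.Icc (0:ℝ) 1} with hCdef
  have hCm : MeasurableSet C := by
    have hCi : C = ⋂ j, (fun x => psum h x j) ⁻¹' Set.Icc (0:ℝ) 1 := by
      ext x; simp [hCdef, Set.mem_iInter]
    rw [hCi]
    exact MeasurableSet.iInter (fun j => (measurable_psum h j) measurableSet_Icc)
  have hint : ∀ x : Fin (k+1) → ℝ,
      (∏ j : Fin (2*k), Set.indicator (Set.Icc (0:ℝ) 1) (fun _ => (1:ℝ))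
        (x 0 + ∑ q ∈ Finset.Iic j, eps h q * x (blk h q).succ))
      = Set.indicator C (fun _ => (1:ℝ)) x := by
    intro x
    by_cases hx : x ∈ C
    · rw [Set.indicator_of_mem hx]
      apply Finset.prod_eq_one
      intro j _
      exact Set.indicator_of_mem (hx j) _
    · rw [Set.indicator_of_notMem hx]
      rw [hCdef, Set.mem_setOf_eq] at hx
      push_neg at hx
      obtain ⟨j, hj⟩ := hx
      apply Finset.prod_eq_zero (Finset.mem_univ j)
      exact Set.indicator_of_notMem hj _
  rw [ppIntegral]
  rw [MeasureTheory.integral_congr_ae (Filter.Eventually.of_forall hint)]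
  rw [MeasureTheory.setIntegral_indicator hCm]
  rw [MeasureTheory.setIntegral_const]
  rw [measureReal_def, hCdef, volume_constraint_set h hnc']
  simp
end

section
/- Let m_{2k}(γ_T^{(m)}) = Σ_{π∈P_2(2k)} m^{k−1−f(π)} I(π), where I(π) = ∫_{[0,1]×[−1,1]^k} Π_{j=1}^{2k} 1_{[0,1]}(x_0 + Σ_{q=1}^j ε_π(q)x_{π(q)}) dx, and f(π) ≥ k−1 with equality iff π is noncrossing, and I(π) = 1 for noncrossing π. Then lim_{m→∞} m_{2k}(γ_T^{(m)}) = C_k, the k-th Catalan number. -/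
open Matrix MeasureTheory
open scoped Kronecker BigOperators

namespace NCaux
open Finset DyckStep

set_option linter.unusedSectionVars false

variable {k : ℕ}

/-- depth function of a set of opener positions -/
def dpt (O : Finset (Fin (2*k))) (x : Fin (2*k)) : ℤ :=
  (((Finset.Iic x).filter (· ∈ O)).card : ℤ) - ((Finset.Iic x).filter (· ∉ O)).card

lemma dpt_succ (O : Finset (Fin (2*k))) (x y : Fin (2*k)) (hxy : (y:ℕ) = (x:ℕ) + 1) :
    dpt O y = dpt O x + (if y ∈ O then 1 else -1) := by
  have hxy' : x < y := by simp [Fin.lt_def, hxy]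
  have hIic : Finset.Iic y = insert y (Finset.Iic x) := by
    ext z
    simp only [Finset.mem_Iic, Finset.mem_insert, Fin.le_def, hxy]
    omega
  have hynot : y ∉ Finset.Iic x := by simp [Fin.le_def, hxy]
  by_cases hy : y ∈ O
  · have h1 : (Finset.Iic y).filter (· ∈ O) = insert y ((Finset.Iic x).filter (· ∈ O)) := by
      rw [hIic, Finset.filter_insert, if_pos hy]
    have h2 : (Finset.Iic y).filter (· ∉ O) = (Finset.Iic x).filter (· ∉ O) := by
      rw [hIic, Finset.filter_insert, if_neg (by simp [hy])]
    rw [dpt, dpt, h1, h2, Finset.card_insert_of_notMem (by simp [hynot])]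
    simp [hy]; ring
  · have h1 : (Finset.Iic y).filter (· ∈ O) = (Finset.Iic x).filter (· ∈ O) := by
      rw [hIic, Finset.filter_insert, if_neg hy]
    have h2 : (Finset.Iic y).filter (· ∉ O) = insert y ((Finset.Iic x).filter (· ∉ O)) := by
      rw [hIic, Finset.filter_insert, if_pos hy]
    rw [dpt, dpt, h1, h2, Finset.card_insert_of_notMem (by simp [hynot])]
    simp [hy]; ring

lemma dpt_bot (O : Finset (Fin (2*k))) (x : Fin (2*k)) (hx : (x:ℕ) = 0) :
    dpt O x = if x ∈ O then 1 else -1 := by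
  have hIic : Finset.Iic x = {x} := by
    ext z; simp only [Finset.mem_Iic, Finset.mem_singleton, Fin.le_def, Fin.ext_iff, hx]; omega
  by_cases hxO : x ∈ O <;> simp [dpt, hIic, Finset.filter_singleton, hxO]

lemma dpt_pos_of_mem {O : Finset (Fin (2*k))} (hOpre : ∀ x, 0 ≤ dpt O x)
    {p : Fin (2*k)} (hp : p ∈ O) : 1 ≤ dpt O p := by
  rcases Nat.eq_zero_or_pos (p : ℕ) with h0 | h0
  · rw [dpt_bot O p h0, if_pos hp]
  · set x : Fin (2*k) := ⟨(p:ℕ) - 1, lt_trans (by omega) p.isLt⟩ with hx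
    have := dpt_succ O x p (by simp [hx]; omega)
    have h2 := hOpre x
    rw [if_pos hp] at this
    omega


lemma dpt_last {O : Finset (Fin (2*k))} (hOcard : O.card = k) (hk : 0 < k) :
    dpt O ⟨2*k-1, by omega⟩ = 0 := by
  have hIic : Finset.Iic (⟨2*k-1, by omega⟩ : Fin (2*k)) = Finset.univ := by
    ext z; simp only [Finset.mem_Iic, Finset.mem_univ, iff_true, Fin.le_def]
    have := z.isLt; omega
  have h1 : (Finset.univ.filter (· ∈ O) : Finset (Fin (2*k))) = O := by
    simp [Finset.filter_mem_eq_inter]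
  have h2 : ((Finset.univ.filter (· ∉ O) : Finset (Fin (2*k)))).card = 2*k - k := by
    have : (Finset.univ.filter (· ∉ O) : Finset (Fin (2*k))) = Oᶜ := by
      ext z; simp
    rw [this, Finset.card_compl, hOcard, Fintype.card_fin]
  rw [dpt, hIic, h1, h2, hOcard]
  have : 2*k - k = k := by omega
  rw [this]; ring

/-- candidate partners -/
def S (O : Finset (Fin (2*k))) (p : Fin (2*k)) : Finset (Fin (2*k)) :=
  Finset.univ.filter (fun x => p < x ∧ dpt O x < dpt O p)

lemma S_nonempty {O : Finset (Fin (2*k))} (hOcard : O.card = k) (hOpre : ∀ x, 0 ≤ dpt O x)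
    {p : Fin (2*k)} (hp : p ∈ O) : (S O p).Nonempty := by
  have hk : 0 < k := by
    rcases Nat.eq_zero_or_pos k with h | h
    · exact absurd p.isLt (by omega)
    · exact h
  refine ⟨⟨2*k-1, by omega⟩, ?_⟩
  have h1 := dpt_pos_of_mem hOpre hp
  have h2 := dpt_last hOcard hk
  simp only [S, Finset.mem_filter, Finset.mem_univ, true_and]
  constructor
  · rw [Fin.lt_def]
    rcases Nat.lt_or_ge (p:ℕ) (2*k-1) with h | h
    · exact h
    · exfalso
      have : p = (⟨2*k-1, by omega⟩ : Fin (2*k)) := by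
        apply Fin.ext; have := p.isLt; simp; omega
      rw [this] at h1; omega
  · omega

/-- the partner of an opener `p` -/
noncomputable def pbX (O : Finset (Fin (2*k))) (p : Fin (2*k)) : Fin (2*k) :=
  if h : (S O p).Nonempty then (S O p).min' h else p

section PB
variable {O : Finset (Fin (2*k))} (hOcard : O.card = k) (hOpre : ∀ x, 0 ≤ dpt O x)
include hOcard hOpre

lemma pb_spec {p : Fin (2*k)} (hp : p ∈ O) :
    p < pbX O p ∧ dpt O (pbX O p) < dpt O p := by
  have hne := S_nonempty hOcard hOpre hp
  have : pbX O p = (S O p).min' hne := by rw [pbX, dif_pos hne]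
  have hmem := (S O p).min'_mem hne
  rw [← this] at hmem
  simpa [S] using hmem

lemma pb_min {p : Fin (2*k)} (hp : p ∈ O) {x : Fin (2*k)}
    (h1 : p < x) (h2 : x < pbX O p) : dpt O p ≤ dpt O x := by
  have hne := S_nonempty hOcard hOpre hp
  by_contra hlt
  push_neg at hlt
  have hxS : x ∈ S O p := by simp [S, h1, hlt]
  have := (S O p).min'_le x hxS
  rw [pbX, dif_pos hne] at h2
  exact absurd h2 (not_lt.mpr this)

lemma pb_pred {p : Fin (2*k)} (hp : p ∈ O) :
    ∃ y : Fin (2*k), (pbX O p : ℕ) = (y:ℕ) + 1 ∧ dpt O p ≤ dpt O y := by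
  obtain ⟨hlt, hdpt⟩ := pb_spec hOcard hOpre hp
  have hpos : 0 < (pbX O p : ℕ) := lt_of_le_of_lt (Nat.zero_le _) hlt
  refine ⟨⟨(pbX O p : ℕ) - 1, lt_trans (by omega) (pbX O p).isLt⟩, by simp; omega, ?_⟩
  set y : Fin (2*k) := ⟨(pbX O p : ℕ) - 1, lt_trans (by omega) (pbX O p).isLt⟩
  rcases eq_or_lt_of_le (show p ≤ y by rw [Fin.le_def]; simp [y]; rw [Fin.lt_def] at hlt; omega)
    with he | hlt2
  · rw [← he]
  · exact pb_min hOcard hOpre hp hlt2 (by rw [Fin.lt_def]; simp [y]; omega)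

lemma dpt_pb {p : Fin (2*k)} (hp : p ∈ O) : dpt O (pbX O p) = dpt O p - 1 ∧ pbX O p ∉ O := by
  obtain ⟨hlt, hdpt⟩ := pb_spec hOcard hOpre hp
  obtain ⟨y, hy1, hy2⟩ := pb_pred hOcard hOpre hp
  have hstep := dpt_succ O y (pbX O p) hy1
  constructor
  · by_cases hm : pbX O p ∈ O
    · rw [if_pos hm] at hstep; omega
    · rw [if_neg hm] at hstep; omega
  · intro hm
    rw [if_pos hm] at hstep; omega

lemma dpt_mem_gt {p q : Fin (2*k)} (hp : p ∈ O) (hq : q ∈ O) (h1 : p < q) (h2 : q < pbX O p) :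
    dpt O p + 1 ≤ dpt O q := by
  have hpos : 0 < (q : ℕ) := lt_of_le_of_lt (Nat.zero_le _) h1
  set y : Fin (2*k) := ⟨(q:ℕ) - 1, lt_trans (by omega) q.isLt⟩ with hy
  have hstep := dpt_succ O y q (by simp [hy]; omega)
  rw [if_pos hq] at hstep
  rcases eq_or_lt_of_le (show p ≤ y by rw [Fin.le_def]; simp [hy]; rw [Fin.lt_def] at h1; omega)
    with he | hlt2
  · rw [← he] at hstep; omega
  · have := pb_min hOcard hOpre hp hlt2
      (lt_trans (show y < q by rw [Fin.lt_def]; simp [hy]; omega) h2)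
    omega

lemma pb_inj {p q : Fin (2*k)} (hp : p ∈ O) (hq : q ∈ O) (h : pbX O p = pbX O q) : p = q := by
  rcases lt_trichotomy p q with hlt | he | hlt
  · exfalso
    have h2 : q < pbX O p := h ▸ (pb_spec hOcard hOpre hq).1
    have := dpt_mem_gt hOcard hOpre hp hq hlt h2
    have e1 := (dpt_pb hOcard hOpre hp).1
    have e2 := (dpt_pb hOcard hOpre hq).1
    rw [h] at e1; omega
  · exact he
  · exfalso
    have h2 : p < pbX O q := h ▸ (pb_spec hOcard hOpre hp).1
    have := dpt_mem_gt hOcard hOpre hq hp hlt h2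
    have e1 := (dpt_pb hOcard hOpre hp).1
    have e2 := (dpt_pb hOcard hOpre hq).1
    rw [h] at e1; omega


noncomputable def aO (O : Finset (Fin (2*k))) (hOcard : O.card = k) : Fin k → Fin (2*k) :=
  O.orderEmbOfFin hOcard

noncomputable def bO (O : Finset (Fin (2*k))) (hOcard : O.card = k) : Fin k → Fin (2*k) :=
  fun i => pbX O (aO O hOcard i)

include hOcard hOpre

lemma aO_mem (i : Fin k) : aO O hOcard i ∈ O := Finset.orderEmbOfFin_mem O hOcard i

lemma bO_not_mem (i : Fin k) : bO O hOcard i ∉ O :=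
  (dpt_pb hOcard hOpre (aO_mem hOcard hOpre i)).2

lemma aO_inj : Function.Injective (aO O hOcard) := (O.orderEmbOfFin hOcard).injective

lemma bO_inj : Function.Injective (bO O hOcard) := by
  intro i j hij
  exact aO_inj hOcard hOpre
    (pb_inj hOcard hOpre (aO_mem hOcard hOpre i) (aO_mem hOcard hOpre j) hij)

lemma bO_image : Finset.univ.image (bO O hOcard) = Oᶜ := by
  apply Finset.eq_of_subset_of_card_le
  · intro x hx
    simp only [Finset.mem_image] at hx
    obtain ⟨i, _, rfl⟩ := hx
    simpa using bO_not_mem hOcard hOpre i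
  · rw [Finset.card_compl, Fintype.card_fin, hOcard,
      Finset.card_image_of_injective _ (bO_inj hOcard hOpre), Finset.card_univ, Fintype.card_fin]
    omega

lemma isPairPart_mk : IsPairPart k (aO O hOcard) (bO O hOcard) := by
  refine ⟨fun i => (pb_spec hOcard hOpre (aO_mem hOcard hOpre i)).1,
    fun i j hij => (O.orderEmbOfFin hOcard).strictMono hij, fun i j hij => ?_, fun x => ?_⟩
  · refine ⟨fun h => hij (aO_inj hOcard hOpre h), fun h => ?_,
      fun h => hij (bO_inj hOcard hOpre h)⟩
    exact bO_not_mem hOcard hOpre j (h ▸ aO_mem hOcard hOpre i)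
  · by_cases hx : x ∈ O
    · have : x ∈ Set.range (O.orderEmbOfFin hOcard) := by
        rw [Finset.range_orderEmbOfFin]; exact hx
      obtain ⟨i, hi⟩ := this
      exact ⟨i, Or.inl hi.symm⟩
    · have : x ∈ Finset.univ.image (bO O hOcard) := by
        rw [bO_image hOcard hOpre]; simpa using hx
      simp only [Finset.mem_image] at this
      obtain ⟨i, _, hi⟩ := this
      exact ⟨i, Or.inr hi.symm⟩

lemma noncross_mk : Noncross (aO O hOcard) (bO O hOcard) := by
  rintro ⟨i, j, h1, h2, h3⟩
  have hmi := aO_mem hOcard hOpre i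
  have hmj := aO_mem hOcard hOpre j
  have e1 : dpt O (bO O hOcard i) = dpt O (aO O hOcard i) - 1 :=
    (dpt_pb hOcard hOpre hmi).1
  have h4 : dpt O (aO O hOcard i) + 1 ≤ dpt O (aO O hOcard j) :=
    dpt_mem_gt hOcard hOpre hmi hmj h1 h2
  have h5 : dpt O (aO O hOcard j) ≤ dpt O (bO O hOcard i) :=
    pb_min hOcard hOpre hmj h2 h3
  omega


end PB

section PairPart
variable {a b : Fin k → Fin (2*k)} (h : IsPairPart k a b)

/-- the set of openers -/
def Oa (a : Fin k → Fin (2*k)) : Finset (Fin (2*k)) := Finset.univ.image a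

include h

lemma a_strictMono : StrictMono a := fun i j hij => h.2.1 i j hij

lemma a_inj : Function.Injective a := (a_strictMono h).injective

lemma ab_ne (i j : Fin k) : a i ≠ b j := by
  rcases eq_or_ne i j with rfl | hij
  · exact ne_of_lt (h.1 i)
  · exact (h.2.2.1 i j hij).2.1

lemma b_inj : Function.Injective b := by
  intro i j hij
  by_contra hne
  exact (h.2.2.1 i j hne).2.2 hij

lemma mem_Oa {x : Fin (2*k)} : x ∈ Oa a ↔ ∃ i, x = a i := by
  simp [Oa, eq_comm]

lemma not_mem_Oa {x : Fin (2*k)} : x ∉ Oa a ↔ ∃ i, x = b i := by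
  rw [mem_Oa h]
  constructor
  · intro hx
    rcases h.2.2.2 x with ⟨i, hi | hi⟩
    · exact absurd ⟨i, hi⟩ hx
    · exact ⟨i, hi⟩
  · rintro ⟨i, rfl⟩ ⟨j, hj⟩
    exact ab_ne h j i hj.symm

lemma Oa_card : (Oa a).card = k := by
  rw [Oa, Finset.card_image_of_injective _ (a_inj h), Finset.card_univ, Fintype.card_fin]

lemma dpt_Oa (x : Fin (2*k)) :
    dpt (Oa a) x = ((Finset.univ.filter (fun i => a i ≤ x)).card : ℤ) -
      (Finset.univ.filter (fun i => b i ≤ x)).card := by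
  have h1 : (Finset.Iic x).filter (· ∈ Oa a) = (Finset.univ.filter (fun i => a i ≤ x)).image a := by
    ext y
    simp only [Finset.mem_filter, Finset.mem_Iic, Finset.mem_image, Finset.mem_univ, true_and]
    rw [mem_Oa h]
    constructor
    · rintro ⟨hy, i, rfl⟩; exact ⟨i, hy, rfl⟩
    · rintro ⟨i, hi, rfl⟩; exact ⟨hi, i, rfl⟩
  have h2 : (Finset.Iic x).filter (· ∉ Oa a) =
      (Finset.univ.filter (fun i => b i ≤ x)).image b := by
    ext y
    simp only [Finset.mem_filter, Finset.mem_Iic, Finset.mem_image, Finset.mem_univ, true_and]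
    rw [not_mem_Oa h]
    constructor
    · rintro ⟨hy, i, rfl⟩; exact ⟨i, hy, rfl⟩
    · rintro ⟨i, hi, rfl⟩; exact ⟨hi, i, rfl⟩
  rw [dpt, h1, h2, Finset.card_image_of_injective _ (a_inj h),
    Finset.card_image_of_injective _ (b_inj h)]

lemma Oa_pre (x : Fin (2*k)) : 0 ≤ dpt (Oa a) x := by
  rw [dpt_Oa h]
  have : (Finset.univ.filter (fun i => b i ≤ x)) ⊆ (Finset.univ.filter (fun i => a i ≤ x)) := by
    intro i hi
    simp only [Finset.mem_filter, Finset.mem_univ, true_and] at *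
    exact le_of_lt (lt_of_lt_of_le (h.1 i) hi)
  have := Finset.card_le_card this
  omega

lemma cnt_split (f : Fin k → Fin (2*k)) {p x : Fin (2*k)} (hpx : p ≤ x) :
    (Finset.univ.filter (fun i => f i ≤ x)).card =
      (Finset.univ.filter (fun i => f i ≤ p)).card +
      (Finset.univ.filter (fun i => p < f i ∧ f i ≤ x)).card := by
  rw [← Finset.card_union_of_disjoint]
  · congr 1
    ext i
    simp only [Finset.mem_union, Finset.mem_filter, Finset.mem_univ, true_and]
    constructor
    · intro hfx
      rcases le_or_gt (f i) p with hle | hlt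
      · exact Or.inl hle
      · exact Or.inr ⟨hlt, hfx⟩
    · rintro (hle | ⟨_, hfx⟩)
      · exact le_trans hle hpx
      · exact hfx
  · rw [Finset.disjoint_filter]
    intro i _ hle hmem
    exact absurd hmem.1 (not_lt.mpr hle)

lemma dpt_diff {p x : Fin (2*k)} (hpx : p ≤ x) :
    dpt (Oa a) x - dpt (Oa a) p =
      ((Finset.univ.filter (fun i => p < a i ∧ a i ≤ x)).card : ℤ) -
      (Finset.univ.filter (fun i => p < b i ∧ b i ≤ x)).card := by
  rw [dpt_Oa h, dpt_Oa h, cnt_split h a hpx, cnt_split h b hpx]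
  push_cast
  ring

variable (hnc : Noncross a b)
include hnc

lemma NC1 {i j : Fin k} (hij : i ≠ j) :
    (a i < a j ∧ a j < b i) ↔ (a i < b j ∧ b j < b i) := by
  have hbb : b i ≠ b j := (h.2.2.1 i j hij).2.2
  have haa : a i ≠ a j := (h.2.2.1 i j hij).1
  constructor
  · rintro ⟨h1, h2⟩
    have hbj : b j < b i := by
      rcases lt_trichotomy (b j) (b i) with hlt | he | hgt
      · exact hlt
      · exact absurd he.symm hbb
      · exact absurd ⟨i, j, h1, h2, hgt⟩ hnc
    exact ⟨lt_trans h1 (h.1 j), hbj⟩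
  · rintro ⟨h1, h2⟩
    have haj : a i < a j := by
      rcases lt_trichotomy (a i) (a j) with hlt | he | hgt
      · exact hlt
      · exact absurd he haa
      · exact absurd ⟨j, i, hgt, h1, h2⟩ hnc
    exact ⟨haj, lt_trans (h.1 j) h2⟩

lemma dpt_b (i : Fin k) : dpt (Oa a) (b i) = dpt (Oa a) (a i) - 1 := by
  have hd := dpt_diff h (le_of_lt (h.1 i))
  have hins : (Finset.univ.filter (fun j => a i < b j ∧ b j ≤ b i)) =
      insert i (Finset.univ.filter (fun j => a i < a j ∧ a j ≤ b i)) := by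
    ext j
    simp only [Finset.mem_insert, Finset.mem_filter, Finset.mem_univ, true_and]
    rcases eq_or_ne j i with rfl | hji
    · simp [h.1 j, le_refl]
    · have hbb : b j ≠ b i := fun e => hji (b_inj h e)
      have hab1 : a j ≠ b i := ab_ne h j i
      constructor
      · rintro ⟨h1, h2⟩
        have h2' : b j < b i := lt_of_le_of_ne h2 hbb
        have := (NC1 h hnc (Ne.symm hji)).mpr ⟨h1, h2'⟩
        exact Or.inr ⟨this.1, le_of_lt this.2⟩
      · rintro (rfl | ⟨h1, h2⟩)
        · exact absurd rfl hji
        · have h2' : a j < b i := lt_of_le_of_ne h2 hab1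
          have := (NC1 h hnc (Ne.symm hji)).mp ⟨h1, h2'⟩
          exact ⟨this.1, le_of_lt this.2⟩
  have hnotmem : i ∉ Finset.univ.filter (fun j => a i < a j ∧ a j ≤ b i) := by
    simp
  rw [hins, Finset.card_insert_of_notMem hnotmem] at hd
  push_cast at hd
  omega

lemma dpt_mid {i : Fin k} {x : Fin (2*k)} (h1 : a i < x) (h2 : x < b i) :
    dpt (Oa a) (a i) ≤ dpt (Oa a) x := by
  have hd := dpt_diff h (le_of_lt h1)
  have hsub : (Finset.univ.filter (fun j => a i < b j ∧ b j ≤ x)) ⊆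
      (Finset.univ.filter (fun j => a i < a j ∧ a j ≤ x)) := by
    intro j hj
    simp only [Finset.mem_filter, Finset.mem_univ, true_and] at *
    obtain ⟨hj1, hj2⟩ := hj
    have hji : j ≠ i := by
      intro e; subst e
      exact absurd (lt_of_le_of_lt hj2 h2) (lt_irrefl _)
    have hbj : b j < b i := lt_of_le_of_lt hj2 h2
    have := (NC1 h hnc (Ne.symm hji)).mpr ⟨hj1, hbj⟩
    exact ⟨this.1, le_trans (le_of_lt (h.1 j)) hj2⟩
  have := Finset.card_le_card hsub
  omega

lemma b_eq_pb (i : Fin k) : b i = pbX (Oa a) (a i) := by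
  have hbS : b i ∈ S (Oa a) (a i) := by
    simp only [S, Finset.mem_filter, Finset.mem_univ, true_and]
    exact ⟨h.1 i, by rw [dpt_b h hnc]; omega⟩
  have hne : (S (Oa a) (a i)).Nonempty := ⟨b i, hbS⟩
  rw [pbX, dif_pos hne]
  have hmin := (S (Oa a) (a i)).min'_mem hne
  simp only [S, Finset.mem_filter, Finset.mem_univ, true_and] at hmin
  refine le_antisymm ?_ ((S (Oa a) (a i)).min'_le _ hbS)
  by_contra hlt
  push_neg at hlt
  exact absurd (dpt_mid h hnc hmin.1 hlt) (not_le.mpr hmin.2)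

end PairPart

lemma count_ofFn {m : ℕ} (g : Fin m → DyckStep) (c : DyckStep) :
    (List.ofFn g).count c = (Finset.univ.filter (fun j => g j = c)).card := by
  induction m with
  | zero => simp
  | succ m ih =>
    rw [List.ofFn_succ, List.count_cons, ih (fun i => g i.succ)]
    rw [Finset.card_filter, Finset.card_filter, Fin.sum_univ_succ]
    by_cases hc : g 0 = c
    · simp [hc]; omega
    · simp [hc]

lemma count_take_ofFn {m : ℕ} (g : Fin m → DyckStep) (c : DyckStep) (i : ℕ) :
    ((List.ofFn g).take i).count c =
      (Finset.univ.filter (fun j : Fin m => (j : ℕ) < i ∧ g j = c)).card := by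
  induction i with
  | zero => simp
  | succ i ih =>
    rw [List.take_succ, List.count_append, ih]
    by_cases hi : i < m
    · have hget : (List.ofFn g)[i]? = some (g ⟨i, hi⟩) := by
        rw [List.getElem?_eq_getElem (by simpa using hi)]
        simp
      rw [hget]
      have hsplit : (Finset.univ.filter (fun j : Fin m => (j : ℕ) < i + 1 ∧ g j = c)) =
          (Finset.univ.filter (fun j : Fin m => (j : ℕ) < i ∧ g j = c)) ∪
          (Finset.univ.filter (fun j : Fin m => j = ⟨i, hi⟩ ∧ g j = c)) := by
        ext j
        simp only [Finset.mem_union, Finset.mem_filter, Finset.mem_univ, true_and, Fin.ext_iff]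
        constructor
        · rintro ⟨h1, h2⟩
          rcases Nat.lt_or_ge (j:ℕ) i with h | h
          · exact Or.inl ⟨h, h2⟩
          · exact Or.inr ⟨by omega, h2⟩
        · rintro (⟨h1, h2⟩ | ⟨h1, h2⟩)
          · exact ⟨by omega, h2⟩
          · exact ⟨by omega, h2⟩
      rw [hsplit, Finset.card_union_of_disjoint]
      · congr 1
        by_cases hc : g ⟨i, hi⟩ = c
        · have : (Finset.univ.filter (fun j : Fin m => j = ⟨i, hi⟩ ∧ g j = c)) = {⟨i, hi⟩} := by
            ext j
            simp only [Finset.mem_filter, Finset.mem_univ, true_and, Finset.mem_singleton]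
            constructor
            · rintro ⟨rfl, _⟩; rfl
            · rintro rfl; exact ⟨rfl, hc⟩
          rw [this]
          simp [hc]
        · have : (Finset.univ.filter (fun j : Fin m => j = ⟨i, hi⟩ ∧ g j = c)) = ∅ := by
            ext j
            simp only [Finset.mem_filter, Finset.mem_univ, true_and, Finset.notMem_empty,
              iff_false, not_and]
            rintro rfl; exact hc
          rw [this]
          simp [List.count_cons, hc]
      · rw [Finset.disjoint_filter]
        rintro j _ ⟨h1, _⟩ ⟨rfl, _⟩
        simp at h1
    · have hget : (List.ofFn g)[i]? = none := by
        rw [List.getElem?_eq_none]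
        simpa using hi
      rw [hget]
      have : ∀ j : Fin m, ((j : ℕ) < i + 1 ∧ g j = c) ↔ ((j : ℕ) < i ∧ g j = c) := by
        intro j
        have := j.isLt
        constructor <;> rintro ⟨h1, h2⟩ <;> exact ⟨by omega, h2⟩
      simp only [this]
      simp


def wordOf (O : Finset (Fin (2*k))) : List DyckStep :=
  List.ofFn (fun q => if q ∈ O then U else D)

lemma ite_eq_U {O : Finset (Fin (2*k))} (q : Fin (2*k)) :
    ((if q ∈ O then U else D) = U) ↔ q ∈ O := by
  by_cases hq : q ∈ O <;> simp [hq]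

lemma ite_eq_D {O : Finset (Fin (2*k))} (q : Fin (2*k)) :
    ((if q ∈ O then U else D) = D) ↔ q ∉ O := by
  by_cases hq : q ∈ O <;> simp [hq]

lemma count_U_wordOf (O : Finset (Fin (2*k))) : (wordOf O).count U = O.card := by
  rw [wordOf, count_ofFn]
  congr 1
  ext q
  simp [ite_eq_U]

lemma count_D_wordOf (O : Finset (Fin (2*k))) : (wordOf O).count D = Oᶜ.card := by
  rw [wordOf, count_ofFn]
  congr 1
  ext q
  simp [ite_eq_D]

lemma wordOf_prefix {O : Finset (Fin (2*k))} (hOpre : ∀ x, 0 ≤ dpt O x) (i : ℕ) :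
    ((wordOf O).take i).count D ≤ ((wordOf O).take i).count U := by
  rw [wordOf, count_take_ofFn, count_take_ofFn]
  rcases Nat.eq_zero_or_pos i with rfl | hi
  · simp
  rcases Nat.eq_zero_or_pos (2*k) with hz | hp
  · have : (Finset.univ : Finset (Fin (2*k))) = ∅ := by
      apply Finset.univ_eq_empty_iff.mpr
      constructor; intro q; exact absurd q.isLt (by omega)
    simp [this]
  set x : Fin (2*k) := ⟨min i (2*k) - 1, by omega⟩ with hx
  have hU : (Finset.univ.filter (fun j : Fin (2*k) => (j:ℕ) < i ∧ (if j ∈ O then U else D) = U)) =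
      (Finset.Iic x).filter (· ∈ O) := by
    ext j
    have := j.isLt
    simp only [Finset.mem_filter, Finset.mem_univ, true_and, Finset.mem_Iic, Fin.le_def,
      ite_eq_U, hx]
    constructor
    · rintro ⟨h1, h2⟩; exact ⟨by omega, h2⟩
    · rintro ⟨h1, h2⟩; exact ⟨by omega, h2⟩
  have hD : (Finset.univ.filter (fun j : Fin (2*k) => (j:ℕ) < i ∧ (if j ∈ O then U else D) = D)) =
      (Finset.Iic x).filter (· ∉ O) := by
    ext j
    have := j.isLt
    simp only [Finset.mem_filter, Finset.mem_univ, true_and, Finset.mem_Iic, Fin.le_def,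
      ite_eq_D, hx]
    constructor
    · rintro ⟨h1, h2⟩; exact ⟨by omega, h2⟩
    · rintro ⟨h1, h2⟩; exact ⟨by omega, h2⟩
  rw [hU, hD]
  have := hOpre x
  rw [dpt] at this
  omega

/-- the Dyck word associated to an opener set -/
def dyckOf (O : Finset (Fin (2*k))) (hOcard : O.card = k) (hOpre : ∀ x, 0 ≤ dpt O x) :
    DyckWord where
  toList := wordOf O
  count_U_eq_count_D := by
    rw [count_U_wordOf, count_D_wordOf, hOcard, Finset.card_compl, Fintype.card_fin]
    omega
  count_D_le_count_U i := wordOf_prefix hOpre i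

lemma semilength_dyckOf (O : Finset (Fin (2*k))) (hOcard : O.card = k)
    (hOpre : ∀ x, 0 ≤ dpt O x) : (dyckOf O hOcard hOpre).semilength = k := by
  rw [DyckWord.semilength]
  show (wordOf O).count U = k
  rw [count_U_wordOf, hOcard]

section FromWord
variable (w : DyckWord)

lemma length_w (hw : w.semilength = k) : w.toList.length = 2*k := by
  rw [← w.two_mul_semilength_eq_length, hw]

/-- opener set of a Dyck word of semilength `k` -/
def Ow (hl : w.toList.length = 2*k) : Finset (Fin (2*k)) :=
  Finset.univ.filter (fun q : Fin (2*k) =>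
    w.toList[(q : ℕ)]'(by rw [hl]; exact q.isLt) = U)

lemma wordOf_Ow (hl : w.toList.length = 2*k) : wordOf (Ow w hl) = w.toList := by
  apply List.ext_getElem
  · rw [wordOf, List.length_ofFn, hl]

  · intro n h1 h2
    simp only [wordOf, List.getElem_ofFn]
    rcases (w.toList[n]'h2).dichotomy with hU | hD
    · rw [hU, if_pos]
      simp only [Ow, Finset.mem_filter, Finset.mem_univ, true_and]
      convert hU
    · rw [hD, if_neg]
      simp only [Ow, Finset.mem_filter, Finset.mem_univ, true_and]
      rw [hD]
      simp
end FromWord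


section Bridge
variable {O : Finset (Fin (2*k))}

lemma dpt_eq_counts (O : Finset (Fin (2*k))) (x : Fin (2*k)) :
    dpt O x = (((wordOf O).take ((x:ℕ)+1)).count U : ℤ) -
      ((wordOf O).take ((x:ℕ)+1)).count D := by
  rw [wordOf, count_take_ofFn, count_take_ofFn, dpt]
  have hU : (Finset.Iic x).filter (· ∈ O) =
      (Finset.univ.filter (fun j : Fin (2*k) => (j:ℕ) < (x:ℕ)+1 ∧ (if j ∈ O then U else D) = U)) := by
    ext j
    simp only [Finset.mem_filter, Finset.mem_univ, true_and, Finset.mem_Iic, Fin.le_def, ite_eq_U]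
    constructor
    · rintro ⟨h1, h2⟩; exact ⟨by omega, h2⟩
    · rintro ⟨h1, h2⟩; exact ⟨by omega, h2⟩
  have hD : (Finset.Iic x).filter (· ∉ O) =
      (Finset.univ.filter (fun j : Fin (2*k) => (j:ℕ) < (x:ℕ)+1 ∧ (if j ∈ O then U else D) = D)) := by
    ext j
    simp only [Finset.mem_filter, Finset.mem_univ, true_and, Finset.mem_Iic, Fin.le_def, ite_eq_D]
    constructor
    · rintro ⟨h1, h2⟩; exact ⟨by omega, h2⟩
    · rintro ⟨h1, h2⟩; exact ⟨by omega, h2⟩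
  rw [hU, hD]

lemma Ow_card (w : DyckWord) (hw : w.semilength = k) (hl : w.toList.length = 2*k) :
    (Ow w hl).card = k := by
  have h1 := count_U_wordOf (Ow w hl)
  rw [wordOf_Ow w hl] at h1
  rw [← h1]
  exact hw

lemma Ow_pre (w : DyckWord) (hl : w.toList.length = 2*k) :
    ∀ x, 0 ≤ dpt (Ow w hl) x := by
  intro x
  rw [dpt_eq_counts, wordOf_Ow w hl]
  have := w.count_D_le_count_U ((x:ℕ)+1)
  omega

lemma Ow_eq_of_toList {w : DyckWord} (hl : w.toList.length = 2*k)
    (hList : w.toList = wordOf O) : Ow w hl = O := by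
  ext q
  simp only [Ow, Finset.mem_filter, Finset.mem_univ, true_and]
  have : w.toList[(q:ℕ)]'(by rw [hl]; exact q.isLt) = if q ∈ O then U else D := by
    have e : ∀ (l : List DyckStep) (he : l = wordOf O) (hq : (q:ℕ) < l.length),
        l[(q:ℕ)]'hq = if q ∈ O then U else D := by
      rintro l rfl hq
      simp only [wordOf, List.getElem_ofFn]
    exact e w.toList hList _
  rw [this, ite_eq_U]

lemma Oa_aO (hOcard : O.card = k) : Oa (aO O hOcard) = O := by
  ext x
  rw [Oa]
  constructor
  · intro hx
    simp only [Finset.mem_image, Finset.mem_univ, true_and] at hx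
    obtain ⟨i, rfl⟩ := hx
    exact Finset.orderEmbOfFin_mem O hOcard i
  · intro hx
    have : x ∈ Set.range (O.orderEmbOfFin hOcard) := by
      rw [Finset.range_orderEmbOfFin]; exact hx
    obtain ⟨i, hi⟩ := this
    simp only [Finset.mem_image, Finset.mem_univ, true_and]
    exact ⟨i, hi⟩

lemma a_eq_aO {a b : Fin k → Fin (2*k)} (h : IsPairPart k a b) (hOcard : (Oa a).card = k) :
    a = aO (Oa a) hOcard := by
  apply Finset.orderEmbOfFin_unique hOcard
  · intro i
    rw [mem_Oa h]
    exact ⟨i, rfl⟩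
  · exact a_strictMono h

end Bridge

lemma aO_congr {O1 O2 : Finset (Fin (2*k))} (hOO : O1 = O2) (hc1 : O1.card = k)
    (hc2 : O2.card = k) : aO O1 hc1 = aO O2 hc2 := by subst hOO; rfl

lemma bO_congr {O1 O2 : Finset (Fin (2*k))} (hOO : O1 = O2) (hc1 : O1.card = k)
    (hc2 : O2.card = k) : bO O1 hc1 = bO O2 hc2 := by subst hOO; rfl

/-- the bijection between noncrossing pair partitions and Dyck words -/
noncomputable def ncEquiv (k : ℕ) :
    {p : PP k // Noncross p.1.1 p.1.2} ≃ {w : DyckWord // w.semilength = k} where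
  toFun p := ⟨dyckOf (Oa p.1.1.1) (Oa_card p.1.2) (Oa_pre p.1.2),
    semilength_dyckOf _ _ _⟩
  invFun w := ⟨⟨⟨aO (Ow w.1 (length_w w.1 w.2)) (Ow_card w.1 w.2 (length_w w.1 w.2)),
      bO (Ow w.1 (length_w w.1 w.2)) (Ow_card w.1 w.2 (length_w w.1 w.2))⟩,
      isPairPart_mk (Ow_card w.1 w.2 (length_w w.1 w.2)) (Ow_pre w.1 (length_w w.1 w.2))⟩,
      noncross_mk (Ow_card w.1 w.2 (length_w w.1 w.2)) (Ow_pre w.1 (length_w w.1 w.2))⟩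
  left_inv p := by
    obtain ⟨⟨⟨a, b⟩, h⟩, hnc⟩ := p
    apply Subtype.ext
    apply Subtype.ext
    have hc2 : (Oa a).card = k := Oa_card h
    have hOO : Ow (dyckOf (Oa a) (Oa_card h) (Oa_pre h))
        (length_w _ (semilength_dyckOf _ _ _)) = Oa a :=
      Ow_eq_of_toList _ rfl
    show (⟨aO _ _, bO _ _⟩ : (Fin k → Fin (2*k)) × (Fin k → Fin (2*k))) = (a, b)
    rw [aO_congr hOO _ hc2, bO_congr hOO _ hc2]
    have ha : aO (Oa a) hc2 = a := (a_eq_aO h hc2).symm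
    refine Prod.ext ha ?_
    funext i
    show pbX (Oa a) (aO (Oa a) hc2 i) = b i
    rw [ha]
    exact (b_eq_pb h hnc i).symm
  right_inv w := by
    obtain ⟨w, hw⟩ := w
    apply Subtype.ext
    apply DyckWord.ext
    show wordOf (Oa (aO (Ow w (length_w w hw)) (Ow_card w hw (length_w w hw)))) = w.toList
    rw [Oa_aO, wordOf_Ow]

lemma card_noncross (k : ℕ) : Nat.card {p : PP k // Noncross p.1.1 p.1.2} = catalan k := by
  rw [Nat.card_congr (ncEquiv k), Nat.card_eq_fintype_card,
    DyckWord.card_dyckWord_semilength_eq_catalan]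

end NCaux

/-- `lim_{m→∞} m_{2k}(γ_T^{(m)}) = C_k`, the k-th Catalan number. -/
theorem tendsto_mom_catalan (k : ℕ) (hk : 1 ≤ k)
    (hf : ∀ p : PP k, k - 1 ≤ fRank p.1.1 p.1.2 ∧
      (fRank p.1.1 p.1.2 = k - 1 ↔ Noncross p.1.1 p.1.2))
    (hI : ∀ p : PP k, Noncross p.1.1 p.1.2 → ppIntegral p.2 = 1)
    (hI01 : ∀ p : PP k, ppIntegral p.2 ∈ Set.Icc (0:ℝ) 1) :
    Filter.Tendsto (fun m : ℕ => mom m k) Filter.atTop (nhds (catalan k)) := by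
  classical
  have key : ∀ p : PP k,
      Filter.Tendsto
        (fun m : ℕ => (m : ℝ) ^ ((k : ℤ) - 1 - (fRank p.1.1 p.1.2 : ℤ)) * ppIntegral p.2)
        Filter.atTop (nhds (if Noncross p.1.1 p.1.2 then (1:ℝ) else 0)) := by
    intro p
    by_cases hp : Noncross p.1.1 p.1.2
    · rw [if_pos hp]
      have hfr : fRank p.1.1 p.1.2 = k - 1 := (hf p).2.mpr hp
      have he : (k : ℤ) - 1 - (fRank p.1.1 p.1.2 : ℤ) = 0 := by
        rw [hfr, Nat.cast_sub hk]
        push_cast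
        ring
      simp only [he, zpow_zero, one_mul, hI p hp]
      exact tendsto_const_nhds
    · rw [if_neg hp]
      have hfr : k ≤ fRank p.1.1 p.1.2 := by
        have h1 := (hf p).1
        have h2 : fRank p.1.1 p.1.2 ≠ k - 1 := fun e => hp ((hf p).2.mp e)
        omega
      have he : (k : ℤ) - 1 - (fRank p.1.1 p.1.2 : ℤ) < 0 := by
        have : (k:ℤ) ≤ (fRank p.1.1 p.1.2 : ℤ) := by exact_mod_cast hfr
        omega
      have h0 : Filter.Tendsto
          (fun m : ℕ => (m:ℝ) ^ ((k : ℤ) - 1 - (fRank p.1.1 p.1.2 : ℤ)))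
          Filter.atTop (nhds 0) :=
        (tendsto_zpow_atTop_zero he).comp tendsto_natCast_atTop_atTop
      simpa using h0.mul_const (ppIntegral p.2)
  have hsum := tendsto_finset_sum Finset.univ (fun (p : PP k) _ => key p)
  have hval : (∑ p : PP k, (if Noncross p.1.1 p.1.2 then (1:ℝ) else 0)) = (catalan k : ℝ) := by
    rw [Finset.sum_boole]
    have h1 : (Finset.univ.filter (fun p : PP k => Noncross p.1.1 p.1.2)).card
        = Fintype.card {p : PP k // Noncross p.1.1 p.1.2} := (Fintype.card_subtype _).symm
    have h2 : Fintype.card {p : PP k // Noncross p.1.1 p.1.2} = catalan k := by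
      rw [← Nat.card_eq_fintype_card]
      exact NCaux.card_noncross k
    rw [h1, h2]
  rw [hval] at hsum
  exact hsum
end
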